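/- arXiv:2410.20674 — 2 statements merged into one kernel-verified Lean document; each statement's English description precedes it below -/
import Mathlib

section
/- Assume equation (3.10) admits at most one solution for each nonnegative continuous history. If y₁ and y₂ are solutions of (3.10) with nonnegative continuous histories ϕ₁ and ϕ₂ satisfying ϕ₁(t) ≥ ϕ₂(t) for all t ∈ [t₀ − h̄, t₀], then y₁(t) ≥ y₂(t) for all t ≥ t₀. (Paper's Lemma 5, with the monotonicity of L in its delayed arguments noted after its proof.) -/
open Set

/-- A (nonnegative) solution of the scalar delay equation
`y'(t) = p t * y t + c t * (L (t, y t, y (t - h₁ t), …, y (t - hₘ t)) + G t)` for `t ≥ t₀`,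
with nonnegative continuous history `ϕ` on `[t₀ - h̄, t₀]`. -/
def IsScalSol (m : ℕ) (t₀ hbar : ℝ) (h : Fin m → ℝ → ℝ)
    (p c : ℝ → ℝ) (L : ℝ → ℝ → (Fin m → ℝ) → ℝ) (G : ℝ → ℝ)
    (ϕ y : ℝ → ℝ) : Prop :=
  ContinuousOn y (Ici (t₀ - hbar)) ∧
  (∀ t ∈ Ici (t₀ - hbar), 0 ≤ y t) ∧
  (∀ t ∈ Icc (t₀ - hbar) t₀, y t = ϕ t) ∧
  ∀ t, t₀ ≤ t → HasDerivWithinAt y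
    (p t * y t + c t * (L t (y t) (fun i => y (t - h i t)) + G t)) (Ici t₀) t



section AuxiliaryForStmt4

open Filter Topology MeasureTheory


lemma derivIci_of_Icc {f : ℝ → ℝ} {d a b t : ℝ} (ha : a ≤ t) (hb : t < b)
    (H : HasDerivWithinAt f d (Icc a b) t) : HasDerivWithinAt f d (Ici t) t := by
  have h1 : HasDerivWithinAt f d (Ici t ∩ Iio b) t :=
    H.mono (fun x hx => ⟨ha.trans hx.1, le_of_lt hx.2⟩)
  exact (hasDerivWithinAt_inter (Iio_mem_nhds hb)).1 h1

lemma comp_le {a b K : ℝ} {d D : ℝ → ℝ} (hd : ContinuousOn d (Icc a b))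
    (hD : ∀ t ∈ Ico a b, HasDerivWithinAt d (D t) (Ici t) t)
    (h0 : d a ≤ 0) (hK : ∀ t ∈ Ico a b, 0 ≤ d t → D t ≤ K * d t) :
    ∀ t ∈ Icc a b, d t ≤ 0 := by
  intro x hx
  by_contra hpos
  push_neg at hpos
  have hax : a ≤ x := hx.1
  set S : Set ℝ := Icc a x ∩ d ⁻¹' Iic 0 with hSdef
  have hSsub : S ⊆ Icc a x := inter_subset_left
  have hSne : S.Nonempty := ⟨a, left_mem_Icc.2 hax, by simpa using h0⟩
  have hSclosed : IsClosed S :=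
    ContinuousOn.preimage_isClosed_of_isClosed
      (hd.mono (Icc_subset_Icc le_rfl hx.2)) isClosed_Icc isClosed_Iic
  have hScomp : IsCompact S := isCompact_Icc.of_isClosed_subset hSclosed hSsub
  have hs := hScomp.sSup_mem hSne
  have hbdd := hScomp.bddAbove
  obtain ⟨s, hgen⟩ : ∃ s, sSup S = s := ⟨_, rfl⟩
  rw [hgen] at hs
  have hsa : a ≤ s := hs.1.1
  have hsx : s ≤ x := hs.1.2
  have hsd : d s ≤ 0 := hs.2
  have hslt : s < x := lt_of_le_of_ne hsx (by rintro rfl; exact absurd hpos (not_lt.2 hsd))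
  have hgt : ∀ τ, s < τ → τ ≤ x → 0 < d τ := by
    intro τ h1 h2
    by_contra hle
    push_neg at hle
    exact absurd (hgen ▸ le_csSup hbdd ⟨⟨hsa.trans h1.le, h2⟩, hle⟩) (not_le.2 h1)
  have hds : d s = 0 := by
    refine le_antisymm hsd ?_
    by_contra hneg
    push_neg at hneg
    have hcwa : ContinuousWithinAt d (Icc a b) s := hd s ⟨hsa, hsx.trans hx.2⟩
    have hE : {τ | d τ < 0} ∈ 𝓝[Icc a b] s := hcwa (Iio_mem_nhds hneg)
    have hmono : 𝓝[Ioc s x] s ≤ 𝓝[Icc a b] s :=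
      nhdsWithin_mono s (fun τ hτ => ⟨hsa.trans hτ.1.le, hτ.2.trans hx.2⟩)
    have hne : (𝓝[Ioc s x] s).NeBot := by
      rw [← mem_closure_iff_nhdsWithin_neBot, closure_Ioc hslt.ne]
      exact ⟨le_rfl, hslt.le⟩
    obtain ⟨τ, hτ1, hτ2⟩ := hne.nonempty_of_mem (inter_mem (hmono hE) self_mem_nhdsWithin)
    exact absurd (hgt τ hτ2.1 hτ2.2) (not_lt.2 hτ1.le)
  have hgb := le_gronwallBound_of_liminf_deriv_right_le (f := d) (f' := D)
    (δ := 0) (K := K) (ε := 0) (a := s) (b := x)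
    (hd.mono (Icc_subset_Icc hsa hx.2))
    (fun τ hτ r hr =>
      ((hD τ ⟨hsa.trans hτ.1, hτ.2.trans_le hx.2⟩).liminf_right_slope_le hr))
    hds.le
    (fun τ hτ => by
      rw [add_zero]
      rcases eq_or_lt_of_le hτ.1 with h | h
      · exact hK τ ⟨hsa.trans hτ.1, hτ.2.trans_le hx.2⟩ (by rw [← h, hds])
      · exact hK τ ⟨hsa.trans hτ.1, hτ.2.trans_le hx.2⟩ (hgt τ h hτ.2.le).le)
    x (right_mem_Icc.2 hsx)
  rw [gronwallBound_ε0_δ0] at hgb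
  exact absurd hpos (not_lt.2 hgb)


noncomputable def Ltil (t₀ : ℝ) {m : ℕ} (L : ℝ → ℝ → (Fin m → ℝ) → ℝ) :
    ℝ × ℝ × (Fin m → ℝ) → ℝ :=
  fun q => L (max q.1 t₀) (max q.2.1 0) (fun i => max (q.2.2 i) 0)

noncomputable def Lap (t₀ : ℝ) {m : ℕ} (L : ℝ → ℝ → (Fin m → ℝ) → ℝ) (n : ℕ) :
    ℝ × ℝ × (Fin m → ℝ) → ℝ :=
  fun x => ⨅ q : ℝ × ℝ × (Fin m → ℝ), (Ltil t₀ L q + n * dist x q)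

section LapLemmas

variable {m : ℕ} {t₀ : ℝ} {L : ℝ → ℝ → (Fin m → ℝ) → ℝ}

variable (hLnn : ∀ t ≥ t₀, ∀ a : ℝ, 0 ≤ a → ∀ z : Fin m → ℝ, (∀ i, 0 ≤ z i) → 0 ≤ L t a z)

include hLnn

lemma Ltil_nonneg (q : ℝ × ℝ × (Fin m → ℝ)) : 0 ≤ Ltil t₀ L q :=
  hLnn _ (le_max_right _ _) _ (le_max_right _ _) _ (fun i => le_max_right _ _)

omit hLnn in
lemma Ltil_eq {t a : ℝ} {z : Fin m → ℝ} (ht : t₀ ≤ t) (ha : 0 ≤ a) (hz : ∀ i, 0 ≤ z i) :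
    Ltil t₀ L (t, a, z) = L t a z := by
  simp only [Ltil, max_eq_left ht, max_eq_left ha]
  congr 1
  exact funext fun i => max_eq_left (hz i)

omit hLnn in
lemma Ltil_continuous
    (hLc : ContinuousOn (fun q : ℝ × ℝ × (Fin m → ℝ) => L q.1 q.2.1 q.2.2)
      (Ici t₀ ×ˢ (univ : Set (ℝ × (Fin m → ℝ))))) :
    Continuous (Ltil t₀ L) := by
  have hρ : Continuous (fun q : ℝ × ℝ × (Fin m → ℝ) =>
      ((max q.1 t₀, max q.2.1 0, fun i => max (q.2.2 i) 0) : ℝ × ℝ × (Fin m → ℝ))) := by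
    refine (continuous_fst.max continuous_const).prodMk
      (((continuous_fst.comp continuous_snd).max continuous_const).prodMk
        (continuous_pi fun i => ((continuous_apply i).comp
          (continuous_snd.comp continuous_snd)).max continuous_const))
  exact hLc.comp_continuous hρ (fun x => ⟨show t₀ ≤ max x.1 t₀ from le_max_right _ _, trivial⟩)

lemma Lap_bddBelow (n : ℕ) (x : ℝ × ℝ × (Fin m → ℝ)) :
    BddBelow (range fun q : ℝ × ℝ × (Fin m → ℝ) => Ltil t₀ L q + n * dist x q) := by
  refine ⟨0, ?_⟩
  rintro y ⟨q, rfl⟩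
  have := Ltil_nonneg (L := L) (t₀ := t₀) hLnn q
  positivity

lemma Lap_le_Ltil (n : ℕ) (x : ℝ × ℝ × (Fin m → ℝ)) : Lap t₀ L n x ≤ Ltil t₀ L x := by
  have := ciInf_le (Lap_bddBelow hLnn n x) x
  simpa [Lap] using this

lemma Lap_nonneg (n : ℕ) (x : ℝ × ℝ × (Fin m → ℝ)) : 0 ≤ Lap t₀ L n x := by
  refine le_ciInf fun q => ?_
  have := Ltil_nonneg (L := L) (t₀ := t₀) hLnn q
  positivity

lemma Lap_le_shift (n : ℕ) (x y : ℝ × ℝ × (Fin m → ℝ)) :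
    Lap t₀ L n x ≤ Lap t₀ L n y + n * dist x y := by
  rw [← sub_le_iff_le_add]
  refine le_ciInf fun q => ?_
  rw [sub_le_iff_le_add]
  have h1 : Lap t₀ L n x ≤ Ltil t₀ L q + n * dist x q :=
    ciInf_le (Lap_bddBelow hLnn n x) q
  have h2 : dist x q ≤ dist x y + dist y q := dist_triangle x y q
  nlinarith [Nat.cast_nonneg (α := ℝ) n]

lemma Lap_lip (n : ℕ) (x y : ℝ × ℝ × (Fin m → ℝ)) :
    |Lap t₀ L n x - Lap t₀ L n y| ≤ n * dist x y := by
  rw [abs_sub_le_iff]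
  constructor
  · have := Lap_le_shift hLnn n x y; linarith
  · have := Lap_le_shift hLnn n y x; rw [dist_comm] at this; linarith

lemma Lap_continuous (n : ℕ) : Continuous (Lap t₀ L n) := by
  rw [Metric.continuous_iff]
  intro x ε hε
  refine ⟨ε / (n + 1), by positivity, fun y hy => ?_⟩
  have h1 := Lap_lip hLnn n y x
  have h2 : (0:ℝ) < n + 1 := by positivity
  have h3 : (n:ℝ) ≤ n + 1 := by linarith
  rw [Real.dist_eq]
  calc |Lap t₀ L n y - Lap t₀ L n x| ≤ n * dist y x := h1
  _ ≤ (n + 1) * dist y x := by nlinarith [dist_nonneg (x := y) (y := x)]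
  _ < (n + 1) * (ε / (n + 1)) := by exact mul_lt_mul_of_pos_left hy h2
  _ = ε := by field_simp

lemma Lap_mono_n {n n' : ℕ} (hnn : n ≤ n') (x : ℝ × ℝ × (Fin m → ℝ)) :
    Lap t₀ L n x ≤ Lap t₀ L n' x := by
  refine le_ciInf fun q => ?_
  refine (ciInf_le (Lap_bddBelow hLnn n x) q).trans ?_
  have : (n : ℝ) ≤ n' := Nat.cast_le.2 hnn
  have := dist_nonneg (x := x) (y := q)
  nlinarith

lemma Lap_mono_z
    (hLmono : ∀ t ≥ t₀, ∀ a : ℝ, ∀ z z' : Fin m → ℝ, (∀ i, z i ≤ z' i) →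
      L t a z ≤ L t a z')
    (n : ℕ) (t a : ℝ) {z z' : Fin m → ℝ} (hzz : ∀ i, z i ≤ z' i) :
    Lap t₀ L n (t, a, z) ≤ Lap t₀ L n (t, a, z') := by
  refine le_ciInf fun q => ?_
  obtain ⟨s, b, ζ⟩ := q
  set ξ : Fin m → ℝ := fun i => ζ i - (z' i - z i) with hξ
  have hdist : dist ((t, a, z) : ℝ × ℝ × (Fin m → ℝ)) (s, b, ξ)
      = dist ((t, a, z') : ℝ × ℝ × (Fin m → ℝ)) (s, b, ζ) := by
    simp only [Prod.dist_eq]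
    congr 2
    rcases Nat.eq_zero_or_pos m with hm | hm
    · subst hm
      simp [dist_pi_def]
    · haveI : Nonempty (Fin m) := ⟨⟨0, hm⟩⟩
      simp only [dist_pi_def]
      congr 1
      apply Finset.sup_congr rfl
      intro i _
      have : dist (z i) (ξ i) = dist (z' i) (ζ i) := by
        rw [Real.dist_eq, Real.dist_eq, hξ]
        ring_nf
      exact NNReal.coe_injective (by simpa [coe_nndist] using this)
  have hLle : Ltil t₀ L (s, b, ξ) ≤ Ltil t₀ L (s, b, ζ) := by
    apply hLmono _ (le_max_right _ _)
    intro i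
    exact max_le_max (by have := hzz i; simp [hξ]; linarith) le_rfl
  calc Lap t₀ L n (t, a, z) ≤ Ltil t₀ L (s, b, ξ) + n * dist ((t, a, z) : ℝ × ℝ × (Fin m → ℝ)) (s, b, ξ) :=
        ciInf_le (Lap_bddBelow hLnn n _) _
  _ ≤ Ltil t₀ L (s, b, ζ) + n * dist ((t, a, z') : ℝ × ℝ × (Fin m → ℝ)) (s, b, ζ) := by
        rw [hdist]; exact add_le_add hLle le_rfl
  _ = _ := rfl

lemma Lap_lower
    (hLc : ContinuousOn (fun q : ℝ × ℝ × (Fin m → ℝ) => L q.1 q.2.1 q.2.2)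
      (Ici t₀ ×ˢ (univ : Set (ℝ × (Fin m → ℝ)))))
    (x : ℝ × ℝ × (Fin m → ℝ)) {ε : ℝ} (hε : 0 < ε) :
    ∃ N : ℕ, ∀ n ≥ N, Ltil t₀ L x - ε ≤ Lap t₀ L n x := by
  have hc : ContinuousAt (Ltil t₀ L) x := (Ltil_continuous hLc).continuousAt
  rw [Metric.continuousAt_iff] at hc
  obtain ⟨δ, hδ, hδ'⟩ := hc ε hε
  obtain ⟨N, hN⟩ := exists_nat_ge (Ltil t₀ L x / δ)
  refine ⟨N, fun n hn => le_ciInf fun q => ?_⟩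
  rcases lt_or_ge (dist q x) δ with hlt | hge
  · have := hδ' hlt
    rw [Real.dist_eq, abs_sub_lt_iff] at this
    have h2 : (0:ℝ) ≤ n * dist x q := by positivity
    linarith [this.2]
  · have h1 : Ltil t₀ L x ≤ n * dist x q := by
      have h2 : (N : ℝ) ≤ n := Nat.cast_le.2 hn
      have h3 : Ltil t₀ L x ≤ N * δ := by
        rcases le_or_gt (Ltil t₀ L x) 0 with h | h
        · nlinarith
        · calc Ltil t₀ L x = (Ltil t₀ L x / δ) * δ := by field_simp
          _ ≤ N * δ := by nlinarith
      calc Ltil t₀ L x ≤ N * δ := h3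
      _ ≤ n * dist x q := by rw [dist_comm] at hge; nlinarith
    have := Ltil_nonneg (L := L) (t₀ := t₀) hLnn q
    linarith

end LapLemmas


lemma hasDerivWithinAt_nmem_closure {f : ℝ → ℝ} {d x : ℝ} {s : Set ℝ} (hx : x ∉ closure s) :
    HasDerivWithinAt f d s x := by
  rw [hasDerivWithinAt_iff_tendsto_slope]
  have h1 : 𝓝[s \ {x}] x ≤ 𝓝[s] x := nhdsWithin_mono x diff_subset
  have h2 : 𝓝[s] x = ⊥ := by
    by_contra hne
    exact hx (mem_closure_iff_nhdsWithin_neBot.2 ⟨hne⟩)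
  have h3 : 𝓝[s \ {x}] x = ⊥ := le_bot_iff.1 (h2 ▸ h1)
  rw [h3]
  exact tendsto_bot

lemma hasDerivWithinAt_singleton' (f : ℝ → ℝ) (d x : ℝ) : HasDerivWithinAt f d {x} x := by
  rw [hasDerivWithinAt_iff_tendsto_slope]
  have h3 : ({x} : Set ℝ) \ {x} = ∅ := by simp
  rw [h3, nhdsWithin_empty]
  exact tendsto_bot

def PropsP (t₀ hlow : ℝ) {m : ℕ} (h : Fin m → ℝ → ℝ) (p c F : ℝ → ℝ)
    (L : ℝ → ℝ → (Fin m → ℝ) → ℝ) (y₁ Φ : ℝ → ℝ) (n k : ℕ) (W : ℝ → ℝ) : Prop :=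
  (∀ τ, τ ≤ t₀ → W τ = Φ τ) ∧ Continuous W ∧
  (∀ τ ∈ Icc t₀ (t₀ + k * hlow), 0 ≤ W τ ∧ W τ ≤ y₁ τ) ∧
  (∀ τ ∈ Icc t₀ (t₀ + k * hlow), HasDerivWithinAt W
     (p τ * W τ + c τ * (Lap t₀ L n (τ, W τ, fun i => W (τ - h i τ)) + |F τ|))
     (Icc t₀ (t₀ + k * hlow)) τ)

lemma dist_tuple {m : ℕ} (t a b : ℝ) (z : Fin m → ℝ) :
    dist ((t, a, z) : ℝ × ℝ × (Fin m → ℝ)) (t, b, z) = |a - b| := by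
  rw [Prod.dist_eq, Prod.dist_eq, dist_self, dist_self, Real.dist_eq]
  show max 0 (max |a - b| 0) = |a - b|
  rw [max_eq_left (abs_nonneg (a - b)), max_eq_right (abs_nonneg (a - b))]

lemma step_lemma
    {m : ℕ} {t₀ hlow hbar : ℝ} {h : Fin m → ℝ → ℝ} {p c F : ℝ → ℝ}
    {L : ℝ → ℝ → (Fin m → ℝ) → ℝ} {ϕ₁ y₁ Φ : ℝ → ℝ}
    (hpos : 0 < hlow) (hhle : hlow ≤ hbar)
    (hhc : ∀ i, ContinuousOn (h i) (Ici t₀))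
    (hhb : ∀ i, ∀ t ≥ t₀, hlow ≤ h i t ∧ h i t ≤ hbar)
    (hpc : ContinuousOn p (Ici t₀)) (hcc : ContinuousOn c (Ici t₀))
    (hc1 : ∀ t ≥ t₀, 1 ≤ c t) (hFc : ContinuousOn F (Ici t₀))
    (hLc : ContinuousOn (fun q : ℝ × ℝ × (Fin m → ℝ) => L q.1 q.2.1 q.2.2)
      (Ici t₀ ×ˢ (univ : Set (ℝ × (Fin m → ℝ)))))
    (hLnn : ∀ t ≥ t₀, ∀ a : ℝ, 0 ≤ a → ∀ z : Fin m → ℝ, (∀ i, 0 ≤ z i) → 0 ≤ L t a z)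
    (hLmono : ∀ t ≥ t₀, ∀ a : ℝ, ∀ z z' : Fin m → ℝ, (∀ i, z i ≤ z' i) → L t a z ≤ L t a z')
    (hy₁ : IsScalSol m t₀ hbar h p c L (fun t => |F t|) ϕ₁ y₁)
    (hΦc : Continuous Φ) (hΦnn : ∀ τ, 0 ≤ Φ τ)
    (hΦle : ∀ τ ∈ Icc (t₀ - hbar) t₀, Φ τ ≤ y₁ τ)
    (n k : ℕ) (W : ℝ → ℝ)
    (hW : PropsP t₀ hlow h p c F L y₁ Φ n k W) :
    ∃ W' : ℝ → ℝ, PropsP t₀ hlow h p c F L y₁ Φ n (k + 1) W' ∧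
      ∀ τ, τ ≤ t₀ + k * hlow → W' τ = W τ := by
  obtain ⟨hWhist, hWcont, hWbd, hWder⟩ := hW
  set sk : ℝ := t₀ + k * hlow with hsk
  set sk1 : ℝ := sk + hlow with hsk1
  have hsks : t₀ + ((k + 1 : ℕ) : ℝ) * hlow = sk1 := by
    rw [hsk1, hsk]; push_cast; ring
  have ht₀sk : t₀ ≤ sk := by
    have h9 : (0:ℝ) ≤ (k : ℝ) * hlow := by positivity
    rw [hsk]; linarith
  have hsklt : sk < sk1 := by rw [hsk1]; linarith
  have ht₀sk1 : t₀ ≤ sk1 := ht₀sk.trans hsklt.le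
  have hist_sub : t₀ - hbar ≤ t₀ := by linarith
  have hWnn : ∀ τ, τ ≤ sk → 0 ≤ W τ := by
    intro τ hτ
    rcases le_or_gt τ t₀ with hc' | hc'
    · rw [hWhist τ hc']; exact hΦnn τ
    · exact (hWbd τ ⟨hc'.le, hτ⟩).1
  have hWley : ∀ τ, t₀ - hbar ≤ τ → τ ≤ sk → W τ ≤ y₁ τ := by
    intro τ h1 h2
    rcases le_or_gt τ t₀ with hc' | hc'
    · rw [hWhist τ hc']; exact hΦle τ ⟨h1, hc'⟩
    · exact (hWbd τ ⟨hc'.le, h2⟩).2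
  have hpastlb : ∀ (i : Fin m) t, t₀ ≤ t → t₀ - hbar ≤ t - h i t := by
    intro i t ht; have := (hhb i t ht).2; linarith
  have hpastub : ∀ (i : Fin m) t, t₀ ≤ t → t ≤ sk1 → t - h i t ≤ sk := by
    intro i t ht ht'; have := (hhb i t ht).1; rw [hsk1] at ht'; linarith
  -- bounds
  have hy₁c : ContinuousOn y₁ (Icc (t₀ - hbar) sk1) := hy₁.1.mono (fun x hx => hx.1)
  obtain ⟨Y, hY⟩ := isCompact_Icc.exists_bound_of_continuousOn hy₁c
  have hY0 : 0 ≤ Y := le_trans (norm_nonneg _) (hY t₀ ⟨hist_sub, ht₀sk1⟩)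
  have hy₁le : ∀ τ ∈ Icc (t₀ - hbar) sk1, y₁ τ ≤ Y := fun τ hτ =>
    (le_abs_self _).trans (by simpa [Real.norm_eq_abs] using hY τ hτ)
  obtain ⟨Mp, hMp'⟩ := isCompact_Icc.exists_bound_of_continuousOn
    (hpc.mono (fun x (hx : x ∈ Icc t₀ sk1) => hx.1))
  have hMp : ∀ τ ∈ Icc t₀ sk1, |p τ| ≤ Mp := fun τ hτ => by
    simpa [Real.norm_eq_abs] using hMp' τ hτ
  have hMp0 : 0 ≤ Mp := le_trans (abs_nonneg _) (hMp t₀ ⟨le_rfl, ht₀sk1⟩)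
  obtain ⟨Mc, hMc'⟩ := isCompact_Icc.exists_bound_of_continuousOn
    (hcc.mono (fun x (hx : x ∈ Icc t₀ sk1) => hx.1))
  have hMc : ∀ τ ∈ Icc t₀ sk1, |c τ| ≤ Mc := fun τ hτ => by
    simpa [Real.norm_eq_abs] using hMc' τ hτ
  have hMc0 : 0 ≤ Mc := le_trans (abs_nonneg _) (hMc t₀ ⟨le_rfl, ht₀sk1⟩)
  obtain ⟨MF, hMF'⟩ := isCompact_Icc.exists_bound_of_continuousOn
    (hFc.mono (fun x (hx : x ∈ Icc t₀ sk1) => hx.1))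
  have hMF : ∀ τ ∈ Icc t₀ sk1, |F τ| ≤ MF := fun τ hτ => by
    simpa [Real.norm_eq_abs] using hMF' τ hτ
  have hMF0 : 0 ≤ MF := le_trans (abs_nonneg _) (hMF t₀ ⟨le_rfl, ht₀sk1⟩)
  -- clamp
  set ρ : ℝ → ℝ := fun a => max (-1) (min a (Y + 1)) with hρ
  have hρlip : ∀ a b, |ρ a - ρ b| ≤ |a - b| := by
    intro a b
    simp only [hρ]
    calc |max (-1) (min a (Y+1)) - max (-1) (min b (Y+1))|
        = |max (min a (Y+1)) (-1) - max (min b (Y+1)) (-1)| := by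
          rw [max_comm (-1) (min a (Y+1)), max_comm (-1) (min b (Y+1))]
    _ ≤ |min a (Y+1) - min b (Y+1)| := abs_max_sub_max_le_abs _ _ _
    _ ≤ max |a - b| |(Y+1) - (Y+1)| := abs_min_sub_min_le_max _ _ _ _
    _ = |a - b| := by simp
  have hρid : ∀ a, -1 ≤ a → a ≤ Y + 1 → ρ a = a := by
    intro a h1 h2; simp only [hρ]; rw [min_eq_left h2, max_eq_right h1]
  have hρlb : ∀ a, -1 ≤ ρ a := fun a => le_max_left _ _
  have hρub : ∀ a, ρ a ≤ Y + 1 := fun a => max_le (by linarith) (min_le_right _ _)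
  have hρ0 : ρ 0 = 0 := hρid 0 (by norm_num) (by linarith)
  have hρabs : ∀ a, |ρ a| ≤ Y + 2 := fun a =>
    abs_le.2 ⟨by linarith [hρlb a], by linarith [hρub a]⟩
  -- frozen past
  set P : ℝ → Fin m → ℝ := fun t i => W (t - h i t) with hP
  have hPcont : ∀ i, ContinuousOn (fun t => W (t - h i t)) (Ici t₀) := fun i =>
    hWcont.comp_continuousOn (continuousOn_id.sub (hhc i))
  have hPnn : ∀ t ∈ Icc t₀ sk1, ∀ i, 0 ≤ P t i := fun t ht i =>
    hWnn _ (hpastub i t ht.1 ht.2)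
  have hPle : ∀ t ∈ Icc t₀ sk1, ∀ i, P t i ≤ y₁ (t - h i t) := fun t ht i =>
    hWley _ (hpastlb i t ht.1) (hpastub i t ht.1 ht.2)
  -- the frozen clamped field
  set v : ℝ → ℝ → ℝ :=
    fun t a => p t * ρ a + c t * (Lap t₀ L n (t, ρ a, P t) + |F t|) with hv
  have hdistρ : ∀ t (a b : ℝ), dist ((t, ρ a, P t) : ℝ × ℝ × (Fin m → ℝ)) (t, ρ b, P t)
      = |ρ a - ρ b| := by
    intro t a b
    rw [Prod.dist_eq, Prod.dist_eq, dist_self, dist_self, Real.dist_eq]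
    show max 0 (max |ρ a - ρ b| 0) = |ρ a - ρ b|
    rw [max_eq_left (abs_nonneg (ρ a - ρ b)), max_eq_right (abs_nonneg (ρ a - ρ b))]
  have hn0 : (0:ℝ) ≤ n := Nat.cast_nonneg n
  have hvlip : ∀ t ∈ Icc t₀ sk1, ∀ a b, |v t a - v t b| ≤ (Mp + Mc * n) * |a - b| := by
    intro t ht a b
    have h1 : |Lap t₀ L n (t, ρ a, P t) - Lap t₀ L n (t, ρ b, P t)|
        ≤ n * |ρ a - ρ b| := by
      have h9 := Lap_lip hLnn n ((t, ρ a, P t) : ℝ × ℝ × (Fin m → ℝ)) (t, ρ b, P t)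
      rwa [hdistρ] at h9
    have e1 : v t a - v t b = p t * (ρ a - ρ b)
        + c t * (Lap t₀ L n (t, ρ a, P t) - Lap t₀ L n (t, ρ b, P t)) := by
      simp only [hv]; ring
    have h2 := hρlip a b
    have h3 := hMp t ht
    have h4 := hMc t ht
    calc |v t a - v t b| ≤ |p t * (ρ a - ρ b)|
        + |c t * (Lap t₀ L n (t, ρ a, P t) - Lap t₀ L n (t, ρ b, P t))| := by
          rw [e1]; exact abs_add_le _ _
    _ ≤ Mp * |a - b| + Mc * (n * |a - b|) := by
        rw [abs_mul, abs_mul]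
        have h6 : |Lap t₀ L n (t, ρ a, P t) - Lap t₀ L n (t, ρ b, P t)| ≤ n * |a-b| :=
          h1.trans (mul_le_mul_of_nonneg_left h2 hn0)
        have h12 : |p t| * |ρ a - ρ b| ≤ Mp * |a - b| :=
          mul_le_mul h3 h2 (abs_nonneg _) hMp0
        have h13 : |c t| * |Lap t₀ L n (t, ρ a, P t) - Lap t₀ L n (t, ρ b, P t)|
            ≤ Mc * (n * |a - b|) := mul_le_mul h4 h6 (abs_nonneg _) hMc0
        linarith
    _ = (Mp + Mc * n) * |a - b| := by ring
  have hv0 : ∀ t ∈ Icc t₀ sk1, 0 ≤ v t 0 := by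
    intro t ht
    simp only [hv, hρ0]
    have h1 := Lap_nonneg (t₀ := t₀) (L := L) hLnn n ((t, (0:ℝ), P t) : ℝ × ℝ × (Fin m → ℝ))
    have h2 : (0:ℝ) ≤ c t := by linarith [hc1 t ht.1]
    have h3 := abs_nonneg (F t)
    have h4 : (0:ℝ) ≤ c t * (Lap t₀ L n (t, (0:ℝ), P t) + |F t|) :=
      mul_nonneg h2 (by linarith)
    rw [mul_zero, zero_add]
    exact h4
  have hvy₁ : ∀ t ∈ Icc t₀ sk1, v t (y₁ t)
      ≤ p t * y₁ t + c t * (L t (y₁ t) (fun i => y₁ (t - h i t)) + |F t|) := by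
    intro t ht
    have h01 : 0 ≤ y₁ t := hy₁.2.1 t (by simp only [mem_Ici]; linarith [ht.1])
    have h02 : y₁ t ≤ Y := hy₁le t ⟨by linarith [ht.1], ht.2⟩
    simp only [hv]
    rw [hρid _ (by linarith) (by linarith)]
    have h03 : Lap t₀ L n (t, y₁ t, P t) ≤ Ltil t₀ L (t, y₁ t, P t) := Lap_le_Ltil hLnn n _
    have h04 : Ltil t₀ L (t, y₁ t, P t) = L t (y₁ t) (P t) :=
      Ltil_eq ht.1 h01 (hPnn t ht)
    have h05 : L t (y₁ t) (P t) ≤ L t (y₁ t) (fun i => y₁ (t - h i t)) :=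
      hLmono t ht.1 _ _ _ (hPle t ht)
    have h2 : (0:ℝ) ≤ c t := by linarith [hc1 t ht.1]
    have h6 : Lap t₀ L n (t, y₁ t, P t) + |F t|
        ≤ L t (y₁ t) (fun i => y₁ (t - h i t)) + |F t| := by linarith
    have h7 := mul_le_mul_of_nonneg_left h6 h2
    linarith
  -- Picard bound
  have hmapc : ContinuousOn (fun t => ((t, (0:ℝ), P t) : ℝ × ℝ × (Fin m → ℝ))) (Icc t₀ sk1) := by
    refine ContinuousOn.prodMk continuousOn_id (ContinuousOn.prodMk continuousOn_const ?_)
    rw [continuousOn_pi]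
    intro i
    exact (hPcont i).mono (fun x hx => hx.1)
  obtain ⟨BL, hBL'⟩ := isCompact_Icc.exists_bound_of_continuousOn
    ((Ltil_continuous hLc).comp_continuousOn hmapc)
  have hBL : ∀ τ ∈ Icc t₀ sk1, Ltil t₀ L (τ, 0, P τ) ≤ BL := fun τ hτ =>
    (le_abs_self _).trans (by simpa [Real.norm_eq_abs, Function.comp] using hBL' τ hτ)
  have hBL0 : 0 ≤ BL := le_trans (Ltil_nonneg hLnn _) (hBL t₀ ⟨le_rfl, ht₀sk1⟩)
  have hLapb : ∀ t ∈ Icc t₀ sk1, ∀ a, Lap t₀ L n (t, ρ a, P t) ≤ BL + n * (Y + 2) := by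
    intro t ht a
    have h1 := Lap_le_shift hLnn n ((t, ρ a, P t) : ℝ × ℝ × (Fin m → ℝ)) (t, 0, P t)
    have h2 : dist ((t, ρ a, P t) : ℝ × ℝ × (Fin m → ℝ)) (t, 0, P t) ≤ Y + 2 := by
      have h9 := hdistρ t a 0
      rw [hρ0] at h9
      rw [h9]
      simpa using hρabs a
    have h3 : Lap t₀ L n (t, (0:ℝ), P t) ≤ BL :=
      (Lap_le_Ltil hLnn n _).trans (hBL t ht)
    have h4 := mul_le_mul_of_nonneg_left h2 hn0
    linarith
  set C : ℝ := Mp * (Y + 2) + Mc * ((BL + n * (Y + 2)) + MF) with hCdef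
  have hC0 : 0 ≤ C := by
    rw [hCdef]
    have h1 : (0:ℝ) ≤ Mp * (Y + 2) := mul_nonneg hMp0 (by linarith)
    have h2 : (0:ℝ) ≤ Mc * ((BL + n * (Y + 2)) + MF) :=
      mul_nonneg hMc0 (by have := mul_nonneg hn0 (show (0:ℝ) ≤ Y + 2 by linarith); linarith)
    linarith
  have hvbd : ∀ t ∈ Icc t₀ sk1, ∀ a, |v t a| ≤ C := by
    intro t ht a
    have h1 : |v t a| ≤ |p t| * |ρ a| + |c t| * abs (Lap t₀ L n (t, ρ a, P t) + |F t|) := by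
      simp only [hv]
      refine (abs_add_le _ _).trans ?_
      rw [abs_mul, abs_mul]
    have hLnn' := Lap_nonneg (t₀ := t₀) (L := L) hLnn n ((t, ρ a, P t) : ℝ × ℝ × (Fin m → ℝ))
    have h2 : abs (Lap t₀ L n (t, ρ a, P t) + |F t|) ≤ (BL + n * (Y + 2)) + MF := by
      rw [abs_of_nonneg (by positivity)]
      have h21 := hLapb t ht a
      have h22 := hMF t ht
      linarith
    have h3 := hMp t ht
    have h4 := hMc t ht
    have h5 := hρabs a
    have h6 := abs_nonneg (p t); have h7 := abs_nonneg (c t)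
    have h8 := abs_nonneg (ρ a)
    have h9 := abs_nonneg (Lap t₀ L n (t, ρ a, P t) + |F t|)
    have h10 : |p t| * |ρ a| ≤ Mp * (Y + 2) := mul_le_mul h3 h5 h8 hMp0
    have h11 : |c t| * abs (Lap t₀ L n (t, ρ a, P t) + |F t|)
        ≤ Mc * ((BL + n * (Y + 2)) + MF) := mul_le_mul h4 h2 h9 hMc0
    rw [hCdef]
    linarith
  have hvcont : ∀ x : ℝ, ContinuousOn (fun t => v t x) (Icc sk sk1) := by
    intro x
    have hsub : Icc sk sk1 ⊆ Ici t₀ := fun τ hτ => le_trans ht₀sk hτ.1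
    have hmap2 : ContinuousOn (fun t => ((t, ρ x, P t) : ℝ × ℝ × (Fin m → ℝ))) (Icc sk sk1) := by
      refine ContinuousOn.prodMk continuousOn_id (ContinuousOn.prodMk continuousOn_const ?_)
      rw [continuousOn_pi]; intro i; exact ((hPcont i).mono hsub)
    have h1 : ContinuousOn (fun t => Lap t₀ L n (t, ρ x, P t)) (Icc sk sk1) :=
      (Lap_continuous hLnn n).comp_continuousOn hmap2
    simp only [hv]
    exact ((hpc.mono hsub).mul continuousOn_const).add
      ((hcc.mono hsub).mul (h1.add (hFc.mono hsub).abs))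
  have hCh1 : (0:ℝ) ≤ C * hlow + 1 := by have := mul_nonneg hC0 hpos.le; linarith
  have hplf : IsPicardLindelof v (tmin := sk) (tmax := sk1) ⟨sk, left_mem_Icc.2 hsklt.le⟩ (W sk)
      (Real.toNNReal (C * hlow + 1)) 0 (Real.toNNReal C) (Real.toNNReal (Mp + Mc * n)) := by
    refine ⟨?_, ?_, ?_, ?_⟩
    · intro t ht
      refine LipschitzWith.lipschitzOnWith ?_
      refine LipschitzWith.of_dist_le_mul ?_
      intro a b
      rw [Real.dist_eq, Real.dist_eq, Real.coe_toNNReal _ (by have := mul_nonneg hMc0 hn0; linarith)]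
      exact hvlip t ⟨le_trans ht₀sk ht.1, ht.2⟩ a b
    · intro x _; exact hvcont x
    · intro t ht x _
      rw [Real.coe_toNNReal _ hC0]
      simpa [Real.norm_eq_abs] using hvbd t ⟨le_trans ht₀sk ht.1, ht.2⟩ x
    · have h9 : max (sk1 - sk) (sk - sk) = hlow := by
        rw [max_eq_left (by linarith)]; linarith
      simp only [Real.coe_toNNReal _ hC0, Real.coe_toNNReal _ hCh1, NNReal.coe_zero, sub_zero,
        Subtype.coe_mk]
      rw [h9]; linarith
  obtain ⟨u, hu0', hud⟩ := hplf.exists_eq_forall_mem_Icc_hasDerivWithinAt₀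
  have hu0 : u sk = W sk := hu0'
  have hucont : ContinuousOn u (Icc sk sk1) := fun x hx => (hud x hx).continuousWithinAt
  -- u is nonnegative
  have hunn : ∀ t ∈ Icc sk sk1, 0 ≤ u t := by
    have hcmp := comp_le (K := Mp + Mc * n) (d := fun t => -u t) (D := fun t => -(v t (u t)))
      (hucont.neg)
      (fun t ht => (derivIci_of_Icc ht.1 ht.2 (hud t ⟨ht.1, ht.2.le⟩)).neg)
      (by show -u sk ≤ 0; rw [hu0]; linarith [hWnn sk le_rfl])
      (by
        intro t ht hdt
        have hdt2 : (0:ℝ) ≤ -u t := hdt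
        show -(v t (u t)) ≤ (Mp + Mc * n) * (-u t)
        have tmem : t ∈ Icc t₀ sk1 := ⟨le_trans ht₀sk ht.1, ht.2.le⟩
        have h1 := hvlip t tmem (u t) 0
        rw [sub_zero, abs_of_nonpos (show u t ≤ 0 by linarith)] at h1
        have h2 := neg_abs_le (v t (u t) - v t 0)
        have h3 := hv0 t tmem
        have h4 := abs_le.1 h1
        linarith [h4.1])
    intro t ht
    have h9 : -u t ≤ 0 := hcmp t ht
    linarith
  -- u is below y₁
  have huley : ∀ t ∈ Icc sk sk1, u t ≤ y₁ t := by
    have hcmp := comp_le (K := Mp + Mc * n) (d := fun t => u t - y₁ t)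
      (D := fun t => v t (u t)
        - (p t * y₁ t + c t * (L t (y₁ t) (fun i => y₁ (t - h i t)) + |F t|)))
      (hucont.sub (hy₁.1.mono (fun x hx => show t₀ - hbar ≤ x by
        have := hx.1; linarith)))
      (fun t ht => ((derivIci_of_Icc ht.1 ht.2 (hud t ⟨ht.1, ht.2.le⟩)).sub
        ((hy₁.2.2.2 t (le_trans ht₀sk ht.1)).mono
          (fun x hx => le_trans (le_trans ht₀sk ht.1) hx))))
      (by show u sk - y₁ sk ≤ 0; rw [hu0]; linarith [hWley sk (by linarith) le_rfl])
      (by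
        intro t ht hdt
        have hdt2 : (0:ℝ) ≤ u t - y₁ t := hdt
        show v t (u t)
          - (p t * y₁ t + c t * (L t (y₁ t) (fun i => y₁ (t - h i t)) + |F t|))
          ≤ (Mp + Mc * n) * (u t - y₁ t)
        have tmem : t ∈ Icc t₀ sk1 := ⟨le_trans ht₀sk ht.1, ht.2.le⟩
        have h1 := hvlip t tmem (u t) (y₁ t)
        rw [abs_of_nonneg hdt2] at h1
        have h2 := le_abs_self (v t (u t) - v t (y₁ t))
        have h3 := hvy₁ t tmem
        have h4 := abs_le.1 h1
        linarith [h4.2])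
    intro t ht
    have h9 : u t - y₁ t ≤ 0 := hcmp t ht
    linarith
  -- glue
  set W' : ℝ → ℝ := fun τ => if τ ≤ sk then W τ else u (max sk (min τ sk1)) with hW'
  have hW'eqW : ∀ τ, τ ≤ sk → W' τ = W τ := by
    intro τ hτ; simp only [hW']; rw [if_pos hτ]
  have hW'eqU : ∀ τ ∈ Icc sk sk1, W' τ = u τ := by
    intro τ hτ
    simp only [hW']
    by_cases hc' : τ ≤ sk
    · have he : τ = sk := le_antisymm hc' hτ.1
      rw [if_pos hc', he]; exact hu0.symm
    · rw [if_neg hc', min_eq_left hτ.2, max_eq_right hτ.1]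
  have hW'cont : Continuous W' := by
    simp only [hW']
    refine Continuous.if_le hWcont ?_ continuous_id continuous_const ?_
    · exact hucont.comp_continuous
        (continuous_const.max (continuous_id.min continuous_const))
        (fun x => ⟨le_max_left _ _, max_le hsklt.le (min_le_right _ _)⟩)
    · intro τ hτ
      rw [hτ, min_eq_left hsklt.le, max_self]
      exact hu0.symm
  refine ⟨W', ⟨?_, hW'cont, ?_, ?_⟩, fun τ hτ => hW'eqW τ hτ⟩
  · exact fun τ hτ => (hW'eqW τ (le_trans hτ ht₀sk)).trans (hWhist τ hτ)
  · intro τ hτ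
    rw [hsks] at hτ
    by_cases hc' : τ ≤ sk
    · rw [hW'eqW τ hc']; exact hWbd τ ⟨hτ.1, hc'⟩
    · have hτm : τ ∈ Icc sk sk1 := ⟨(not_le.1 hc').le, hτ.2⟩
      rw [hW'eqU τ hτm]; exact ⟨hunn τ hτm, huley τ hτm⟩
  · intro τ hτ
    rw [hsks] at hτ ⊢
    have hfv : (fun i => W' (τ - h i τ)) = fun i => W (τ - h i τ) :=
      funext fun i => hW'eqW _ (hpastub i τ hτ.1 hτ.2)
    rw [hfv]
    have hunion : Icc t₀ sk ∪ Icc sk sk1 = Icc t₀ sk1 := Icc_union_Icc_eq_Icc ht₀sk hsklt.le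
    rw [← hunion]
    refine HasDerivWithinAt.union ?_ ?_
    · by_cases hA : τ ≤ sk
      · have hder := hWder τ ⟨hτ.1, hA⟩
        have heq : W' τ = W τ := hW'eqW τ hA
        rw [heq]
        exact hder.congr (fun x hx => hW'eqW x hx.2) heq
      · refine hasDerivWithinAt_nmem_closure ?_
        rw [isClosed_Icc.closure_eq]
        exact fun hc' => hA hc'.2
    · by_cases hB : sk ≤ τ
      · have hτm : τ ∈ Icc sk sk1 := ⟨hB, hτ.2⟩
        have hder := hud τ hτm
        have heq : W' τ = u τ := hW'eqU τ hτm
        have hρu : ρ (u τ) = u τ := hρid _ (by linarith [hunn τ hτm])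
          (by linarith [huley τ hτm, hy₁le τ ⟨by linarith [le_trans ht₀sk hτm.1], hτ.2⟩])
        have hval : v τ (u τ) = p τ * W' τ
            + c τ * (Lap t₀ L n (τ, W' τ, fun i => W (τ - h i τ)) + |F τ|) := by
          simp only [hv, hP]
          rw [hρu, heq]
        exact (hder.congr (fun x hx => hW'eqU x hx) heq).congr_deriv hval
      · refine hasDerivWithinAt_nmem_closure ?_
        rw [isClosed_Icc.closure_eq]
        exact fun hc' => hB hc'.1


open MeasureTheory

lemma exists_minsol
    {m : ℕ} {t₀ hlow hbar : ℝ} {h : Fin m → ℝ → ℝ} {p c F : ℝ → ℝ}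
    {L : ℝ → ℝ → (Fin m → ℝ) → ℝ} {ϕ₁ y₁ Φ : ℝ → ℝ}
    (hpos : 0 < hlow) (hhle : hlow ≤ hbar)
    (hhc : ∀ i, ContinuousOn (h i) (Ici t₀))
    (hhb : ∀ i, ∀ t ≥ t₀, hlow ≤ h i t ∧ h i t ≤ hbar)
    (hpc : ContinuousOn p (Ici t₀)) (hcc : ContinuousOn c (Ici t₀))
    (hc1 : ∀ t ≥ t₀, 1 ≤ c t) (hFc : ContinuousOn F (Ici t₀))
    (hLc : ContinuousOn (fun q : ℝ × ℝ × (Fin m → ℝ) => L q.1 q.2.1 q.2.2)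
      (Ici t₀ ×ˢ (univ : Set (ℝ × (Fin m → ℝ)))))
    (hLnn : ∀ t ≥ t₀, ∀ a : ℝ, 0 ≤ a → ∀ z : Fin m → ℝ, (∀ i, 0 ≤ z i) → 0 ≤ L t a z)
    (hLmono : ∀ t ≥ t₀, ∀ a : ℝ, ∀ z z' : Fin m → ℝ, (∀ i, z i ≤ z' i) → L t a z ≤ L t a z')
    (hy₁ : IsScalSol m t₀ hbar h p c L (fun t => |F t|) ϕ₁ y₁)
    (hΦc : Continuous Φ) (hΦnn : ∀ τ, 0 ≤ Φ τ)
    (hΦle : ∀ τ ∈ Icc (t₀ - hbar) t₀, Φ τ ≤ y₁ τ) :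
    ∃ w : ℝ → ℝ, (∀ τ, τ ≤ t₀ → w τ = Φ τ) ∧ ContinuousOn w (Ici (t₀ - hbar)) ∧
      (∀ t ∈ Ici (t₀ - hbar), 0 ≤ w t) ∧ (∀ t, t₀ ≤ t → w t ≤ y₁ t) ∧
      (∀ t, t₀ ≤ t → HasDerivWithinAt w
        (p t * w t + c t * (L t (w t) (fun i => w (t - h i t)) + |F t|)) (Ici t₀) t) := by
  have hist_sub : t₀ - hbar ≤ t₀ := by linarith
  -- base case of the step recursion
  have hbase : ∀ n : ℕ, PropsP t₀ hlow h p c F L y₁ Φ n 0 Φ := by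
    intro n
    have he : t₀ + ((0 : ℕ) : ℝ) * hlow = t₀ := by push_cast; ring
    refine ⟨fun τ _ => rfl, hΦc, ?_, ?_⟩
    · intro τ hτ
      rw [he] at hτ
      have hτ' : τ = t₀ := le_antisymm hτ.2 hτ.1
      subst hτ'
      exact ⟨hΦnn τ, hΦle τ ⟨hist_sub, le_rfl⟩⟩
    · intro τ hτ
      rw [he] at hτ ⊢
      have hτ' : τ = t₀ := le_antisymm hτ.2 hτ.1
      subst hτ'
      rw [Icc_self]
      exact hasDerivWithinAt_singleton' _ _ _
  -- recursively constructed approximations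
  have hseq : ∀ n : ℕ, ∃ Wf : ℕ → ℝ → ℝ, Wf 0 = Φ ∧
      (∀ k : ℕ, PropsP t₀ hlow h p c F L y₁ Φ n k (Wf k)) ∧
      (∀ (k : ℕ) (τ : ℝ), τ ≤ t₀ + k * hlow → Wf (k + 1) τ = Wf k τ) := by
    intro n
    have hstep : ∀ (k : ℕ) (W : ℝ → ℝ), PropsP t₀ hlow h p c F L y₁ Φ n k W →
        ∃ W', PropsP t₀ hlow h p c F L y₁ Φ n (k + 1) W' ∧
          ∀ τ : ℝ, τ ≤ t₀ + k * hlow → W' τ = W τ :=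
      fun k W hW => step_lemma hpos hhle hhc hhb hpc hcc hc1 hFc hLc hLnn hLmono hy₁
        hΦc hΦnn hΦle n k W hW
    choose st h1 h2 using hstep
    let Wr : ∀ k : ℕ, {W : ℝ → ℝ // PropsP t₀ hlow h p c F L y₁ Φ n k W} :=
      fun k => Nat.rec ⟨Φ, hbase n⟩ (fun k prev => ⟨st k prev.1 prev.2, h1 k prev.1 prev.2⟩) k
    exact ⟨fun k => (Wr k).1, rfl, fun k => (Wr k).2,
      fun k τ hτ => h2 k (Wr k).1 (Wr k).2 τ hτ⟩
  choose Wf hWf0 hWfP hWfag using hseq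
  -- coherence of the recursion
  have hagree : ∀ (n k j : ℕ), j ≤ k → ∀ τ : ℝ, τ ≤ t₀ + j * hlow → Wf n k τ = Wf n j τ := by
    intro n k
    induction k with
    | zero => intro j hj τ _; rw [Nat.le_zero.1 hj]
    | succ k ih =>
      intro j hj τ hτ
      by_cases hj' : j = k + 1
      · rw [hj']
      · have hjk : j ≤ k := Nat.lt_succ_iff.1 (lt_of_le_of_ne hj hj')
        have hτ' : τ ≤ t₀ + k * hlow := by
          have h8 : (j : ℝ) ≤ (k : ℝ) := Nat.cast_le.2 hjk
          have h7 := mul_le_mul_of_nonneg_right h8 hpos.le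
          linarith
        rw [hWfag n k τ hτ']
        exact ih j hjk τ hτ
  -- the n-th approximation as a single global function
  set kk : ℝ → ℕ := fun t => ⌈(t - t₀) / hlow⌉₊ with hkk
  have hk1 : ∀ t, t ≤ t₀ + (kk t) * hlow := by
    intro t
    have h9 := Nat.le_ceil ((t - t₀) / hlow)
    rw [div_le_iff₀ hpos] at h9
    simp only [hkk]
    linarith
  set w : ℕ → ℝ → ℝ := fun n t => Wf n (kk t) t with hwdef
  have hweq : ∀ (n K : ℕ) (t : ℝ), t ≤ t₀ + K * hlow → w n t = Wf n K t := by
    intro n K t ht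
    simp only [hwdef]
    rcases le_total (kk t) K with h9 | h9
    · rw [hagree n K (kk t) h9 t (hk1 t)]
    · rw [hagree n (kk t) K h9 t ht]
  have hwhist : ∀ n τ, τ ≤ t₀ → w n τ = Φ τ := fun n τ hτ => (hWfP n (kk τ)).1 τ hτ
  have hwbd : ∀ n t, t₀ ≤ t → 0 ≤ w n t ∧ w n t ≤ y₁ t := fun n t ht =>
    (hWfP n (kk t)).2.2.1 t ⟨ht, hk1 t⟩
  have hwnn' : ∀ n τ, t₀ - hbar ≤ τ → 0 ≤ w n τ := by
    intro n τ hτ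
    rcases le_or_gt τ t₀ with h9 | h9
    · rw [hwhist n τ h9]; exact hΦnn τ
    · exact (hwbd n τ h9.le).1
  have hwcont : ∀ n, Continuous (w n) := by
    intro n
    rw [continuous_iff_continuousAt]
    intro t
    have hlt : t < t₀ + ((kk t + 1 : ℕ) : ℝ) * hlow := by
      have h9 := hk1 t
      push_cast
      push_cast at h9
      linarith
    refine ContinuousAt.congr ((hWfP n (kk t + 1)).2.1.continuousAt) ?_
    refine Filter.eventuallyEq_of_mem (Iio_mem_nhds hlt) (fun τ hτ => ?_)
    exact (hweq n (kk t + 1) τ (le_of_lt hτ)).symm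
  have hwder : ∀ (n K : ℕ), ∀ t ∈ Icc t₀ (t₀ + (K : ℝ) * hlow), HasDerivWithinAt (w n)
      (p t * w n t + c t * (Lap t₀ L n (t, w n t, fun i => w n (t - h i t)) + |F t|))
      (Icc t₀ (t₀ + K * hlow)) t := by
    intro n K t ht
    have hder := (hWfP n K).2.2.2 t ht
    have heq : w n t = Wf n K t := hweq n K t ht.2
    have hfv : (fun i => w n (t - h i t)) = fun i => Wf n K (t - h i t) := by
      funext i
      refine hweq n K _ ?_
      have h9 := (hhb i t ht.1).1
      have h10 := ht.2
      linarith
    rw [heq, hfv]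
    exact hder.congr (fun x hx => hweq n K x hx.2) heq
  -- monotonicity in n
  have hmonoK : ∀ (n K : ℕ), ∀ t ∈ Icc t₀ (t₀ + (K : ℝ) * hlow), w n t ≤ w (n + 1) t := by
    intro n K
    induction K with
    | zero =>
      intro t ht
      have he : t₀ + ((0 : ℕ) : ℝ) * hlow = t₀ := by push_cast; ring
      rw [he] at ht
      have h9 : t = t₀ := le_antisymm ht.2 ht.1
      subst h9
      rw [hwhist n t le_rfl, hwhist (n + 1) t le_rfl]
    | succ K ih =>
      have hsK : t₀ ≤ t₀ + K * hlow := by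
        have h9 : (0 : ℝ) ≤ (K : ℝ) * hlow := by positivity
        linarith
      have hsKs : t₀ + ((K + 1 : ℕ) : ℝ) * hlow = t₀ + K * hlow + hlow := by push_cast; ring
      obtain ⟨Mp, hMp'⟩ := isCompact_Icc.exists_bound_of_continuousOn
        (hpc.mono (fun x (hx : x ∈ Icc t₀ (t₀ + K * hlow + hlow)) => hx.1))
      have hMp : ∀ τ ∈ Icc t₀ (t₀ + K * hlow + hlow), |p τ| ≤ Mp := fun τ hτ => by
        simpa [Real.norm_eq_abs] using hMp' τ hτ
      obtain ⟨Mc, hMc'⟩ := isCompact_Icc.exists_bound_of_continuousOn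
        (hcc.mono (fun x (hx : x ∈ Icc t₀ (t₀ + K * hlow + hlow)) => hx.1))
      have hMc : ∀ τ ∈ Icc t₀ (t₀ + K * hlow + hlow), |c τ| ≤ Mc := fun τ hτ => by
        simpa [Real.norm_eq_abs] using hMc' τ hτ
      have hcmp := comp_le (a := t₀ + K * hlow) (b := t₀ + K * hlow + hlow)
        (K := Mp + Mc * ((n + 1 : ℕ) : ℝ))
        (d := fun t => w n t - w (n + 1) t)
        (D := fun t =>
          (p t * w n t + c t * (Lap t₀ L n (t, w n t, fun i => w n (t - h i t)) + |F t|))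
          - (p t * w (n + 1) t
            + c t * (Lap t₀ L (n + 1) (t, w (n + 1) t, fun i => w (n + 1) (t - h i t)) + |F t|)))
        ((hwcont n).continuousOn.sub (hwcont (n + 1)).continuousOn)
        (by
          intro t ht'
          have htt₀ : t₀ ≤ t := le_trans hsK ht'.1
          have hin : t ∈ Icc t₀ (t₀ + ((K + 1 : ℕ) : ℝ) * hlow) :=
            ⟨htt₀, by rw [hsKs]; exact ht'.2.le⟩
          have hd1 := hwder n (K + 1) t hin
          have hd2 := hwder (n + 1) (K + 1) t hin
          rw [hsKs] at hd1 hd2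
          exact (derivIci_of_Icc htt₀ ht'.2 hd1).sub (derivIci_of_Icc htt₀ ht'.2 hd2))
        (by
          show w n (t₀ + K * hlow) - w (n + 1) (t₀ + K * hlow) ≤ 0
          have h9 := ih (t₀ + K * hlow) ⟨hsK, le_rfl⟩
          linarith)
        (by
          intro t ht' hdt
          have hdt2 : (0 : ℝ) ≤ w n t - w (n + 1) t := hdt
          have htt₀ : t₀ ≤ t := le_trans hsK ht'.1
          have htmem : t ∈ Icc t₀ (t₀ + K * hlow + hlow) := ⟨htt₀, ht'.2.le⟩
          show (p t * w n t + c t * (Lap t₀ L n (t, w n t, fun i => w n (t - h i t)) + |F t|))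
            - (p t * w (n + 1) t
              + c t * (Lap t₀ L (n + 1) (t, w (n + 1) t, fun i => w (n + 1) (t - h i t)) + |F t|))
            ≤ (Mp + Mc * ((n + 1 : ℕ) : ℝ)) * (w n t - w (n + 1) t)
          have hpast : ∀ i, w n (t - h i t) ≤ w (n + 1) (t - h i t) := by
            intro i
            rcases le_or_gt (t - h i t) t₀ with h9 | h9
            · rw [hwhist n _ h9, hwhist (n + 1) _ h9]
            · refine ih _ ⟨h9.le, ?_⟩
              have h8 := (hhb i t htt₀).1
              have h7 := ht'.2.le
              linarith
          have hc0 : 0 ≤ c t := by linarith [hc1 t htt₀]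
          have hl1 : Lap t₀ L n (t, w n t, fun i => w n (t - h i t))
              ≤ Lap t₀ L (n + 1) (t, w n t, fun i => w n (t - h i t)) :=
            Lap_mono_n hLnn (Nat.le_succ n) _
          have hl2 : Lap t₀ L (n + 1) (t, w n t, fun i => w n (t - h i t))
              ≤ Lap t₀ L (n + 1) (t, w n t, fun i => w (n + 1) (t - h i t)) :=
            Lap_mono_z hLnn hLmono (n + 1) t (w n t) hpast
          have hl3 : |Lap t₀ L (n + 1) (t, w n t, fun i => w (n + 1) (t - h i t))
              - Lap t₀ L (n + 1) (t, w (n + 1) t, fun i => w (n + 1) (t - h i t))|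
              ≤ ((n + 1 : ℕ) : ℝ) * |w n t - w (n + 1) t| := by
            have h9 := Lap_lip hLnn (n + 1)
              ((t, w n t, fun i => w (n + 1) (t - h i t)) : ℝ × ℝ × (Fin m → ℝ))
              ((t, w (n + 1) t, fun i => w (n + 1) (t - h i t)) : ℝ × ℝ × (Fin m → ℝ))
            rwa [dist_tuple] at h9
          have hl3' := (abs_le.1 hl3).2
          rw [abs_of_nonneg hdt2] at hl3'
          have hpb := hMp t htmem
          have hcb := hMc t htmem
          have hnn1 : (0 : ℝ) ≤ ((n + 1 : ℕ) : ℝ) := Nat.cast_nonneg _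
          have e1 : p t * w n t - p t * w (n + 1) t ≤ Mp * (w n t - w (n + 1) t) := by
            have h9 : p t * w n t - p t * w (n + 1) t = p t * (w n t - w (n + 1) t) := by ring
            rw [h9]
            calc p t * (w n t - w (n + 1) t) ≤ |p t| * (w n t - w (n + 1) t) :=
                  mul_le_mul_of_nonneg_right (le_abs_self _) hdt2
            _ ≤ Mp * (w n t - w (n + 1) t) := mul_le_mul_of_nonneg_right hpb hdt2
          have e2 : c t * (Lap t₀ L n (t, w n t, fun i => w n (t - h i t)) + |F t|)
              - c t * (Lap t₀ L (n + 1) (t, w (n + 1) t, fun i => w (n + 1) (t - h i t)) + |F t|)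
              ≤ Mc * (((n + 1 : ℕ) : ℝ) * (w n t - w (n + 1) t)) := by
            have h9 : c t * (Lap t₀ L n (t, w n t, fun i => w n (t - h i t)) + |F t|)
                - c t * (Lap t₀ L (n + 1) (t, w (n + 1) t, fun i => w (n + 1) (t - h i t)) + |F t|)
                = c t * (Lap t₀ L n (t, w n t, fun i => w n (t - h i t))
                  - Lap t₀ L (n + 1) (t, w (n + 1) t, fun i => w (n + 1) (t - h i t))) := by ring
            rw [h9]
            have h10 : Lap t₀ L n (t, w n t, fun i => w n (t - h i t))
                - Lap t₀ L (n + 1) (t, w (n + 1) t, fun i => w (n + 1) (t - h i t))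
                ≤ ((n + 1 : ℕ) : ℝ) * (w n t - w (n + 1) t) := by linarith
            calc c t * (Lap t₀ L n (t, w n t, fun i => w n (t - h i t))
                - Lap t₀ L (n + 1) (t, w (n + 1) t, fun i => w (n + 1) (t - h i t)))
                ≤ c t * (((n + 1 : ℕ) : ℝ) * (w n t - w (n + 1) t)) :=
                  mul_le_mul_of_nonneg_left h10 hc0
            _ ≤ Mc * (((n + 1 : ℕ) : ℝ) * (w n t - w (n + 1) t)) := by
                refine mul_le_mul_of_nonneg_right (le_trans (le_abs_self _) hcb) ?_
                exact mul_nonneg hnn1 hdt2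
          nlinarith [e1, e2])
      intro t ht
      rw [hsKs] at ht
      rcases le_total t (t₀ + K * hlow) with h9 | h9
      · exact ih t ⟨ht.1, h9⟩
      · have h8 := hcmp t ⟨h9, ht.2⟩
        have h7 : w n t - w (n + 1) t ≤ 0 := h8
        linarith
  have hmonoN : ∀ τ, t₀ - hbar ≤ τ → Monotone fun n => w n τ := by
    intro τ hτ
    refine monotone_nat_of_le_succ (fun n => ?_)
    rcases le_or_gt τ t₀ with h9 | h9
    · rw [hwhist n τ h9, hwhist (n + 1) τ h9]
    · exact hmonoK n (kk τ) τ ⟨h9.le, hk1 τ⟩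
  -- the limit function
  set wi : ℝ → ℝ := fun τ => ⨆ n, w n τ with hwi
  have hbddA : ∀ τ, t₀ - hbar ≤ τ → BddAbove (range fun n => w n τ) := by
    intro τ hτ
    rcases le_or_gt τ t₀ with h9 | h9
    · refine ⟨Φ τ, ?_⟩; rintro x ⟨n, rfl⟩; exact le_of_eq (hwhist n τ h9)
    · refine ⟨y₁ τ, ?_⟩; rintro x ⟨n, rfl⟩; exact (hwbd n τ h9.le).2
  have htendall : ∀ τ, t₀ - hbar ≤ τ → Tendsto (fun n => w n τ) atTop (𝓝 (wi τ)) :=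
    fun τ hτ => tendsto_atTop_ciSup (hmonoN τ hτ) (hbddA τ hτ)
  have hwihist : ∀ τ, τ ≤ t₀ → wi τ = Φ τ := by
    intro τ hτ
    simp only [hwi]
    have h9 : (fun n : ℕ => w n τ) = fun _ => Φ τ := funext fun n => hwhist n τ hτ
    rw [h9]
    exact ciSup_const
  have hwinn : ∀ τ, t₀ - hbar ≤ τ → 0 ≤ wi τ := by
    intro τ hτ
    have h8 := le_ciSup (hbddA τ hτ) 0
    have h9 := hwnn' 0 τ hτ
    simp only [hwi]
    exact le_trans h9 h8
  have hwiley : ∀ t, t₀ ≤ t → wi t ≤ y₁ t := fun t ht => ciSup_le fun n => (hwbd n t ht).2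
  -- uniform bound of the fields on a window
  set g : ℕ → ℝ → ℝ := fun n τ =>
    p τ * w n τ + c τ * (Lap t₀ L n (τ, w n τ, fun i => w n (τ - h i τ)) + |F τ|) with hgdef
  have hwindow : ∀ T, t₀ ≤ T → ∃ MW : ℝ, ∀ (n : ℕ), ∀ τ ∈ Icc t₀ T, |g n τ| ≤ MW := by
    intro T hT
    obtain ⟨A1, hA1⟩ := isCompact_Icc.exists_bound_of_continuousOn
      (hy₁.1.mono (fun x (hx : x ∈ Icc (t₀ - hbar) T) => hx.1))
    obtain ⟨A2, hA2⟩ := isCompact_Icc.exists_bound_of_continuousOn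
      (hΦc.continuousOn (s := Icc (t₀ - hbar) T))
    set AA : ℝ := max A1 A2 with hAA
    have hwb : ∀ (n : ℕ) (τ : ℝ), τ ∈ Icc (t₀ - hbar) T → w n τ ∈ Icc (0 : ℝ) AA := by
      intro n τ hτ
      refine ⟨hwnn' n τ hτ.1, ?_⟩
      rcases le_or_gt τ t₀ with h9 | h9
      · rw [hwhist n τ h9]
        refine le_trans (le_abs_self _) (le_trans ?_ (le_max_right A1 A2))
        simpa [Real.norm_eq_abs] using hA2 τ hτ
      · refine le_trans (hwbd n τ h9.le).2 (le_trans ?_ (le_max_left A1 A2))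
        exact le_trans (le_abs_self _) (by simpa [Real.norm_eq_abs] using hA1 τ hτ)
    have hKKc : IsCompact (Icc t₀ T ×ˢ (Icc (0:ℝ) AA ×ˢ
        (univ : Set (Fin m)).pi fun _ => Icc (0:ℝ) AA)) :=
      isCompact_Icc.prod (isCompact_Icc.prod (isCompact_univ_pi fun _ => isCompact_Icc))
    obtain ⟨BT, hBT⟩ := hKKc.exists_bound_of_continuousOn (Ltil_continuous hLc).continuousOn
    obtain ⟨Mp, hMp'⟩ := isCompact_Icc.exists_bound_of_continuousOn
      (hpc.mono (fun x (hx : x ∈ Icc t₀ T) => hx.1))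
    obtain ⟨Mc, hMc'⟩ := isCompact_Icc.exists_bound_of_continuousOn
      (hcc.mono (fun x (hx : x ∈ Icc t₀ T) => hx.1))
    obtain ⟨MF, hMF'⟩ := isCompact_Icc.exists_bound_of_continuousOn
      (hFc.mono (fun x (hx : x ∈ Icc t₀ T) => hx.1))
    have hMp0 : 0 ≤ Mp := le_trans (norm_nonneg _) (hMp' t₀ ⟨le_rfl, hT⟩)
    have hMc0 : 0 ≤ Mc := le_trans (norm_nonneg _) (hMc' t₀ ⟨le_rfl, hT⟩)
    refine ⟨Mp * AA + Mc * (BT + MF), ?_⟩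
    intro n τ hτ
    have hτb : t₀ - hbar ≤ τ := by linarith [hτ.1]
    have hwm := hwb n τ ⟨hτb, hτ.2⟩
    have hpastm : ∀ i, w n (τ - h i τ) ∈ Icc (0:ℝ) AA := by
      intro i
      have h8 := (hhb i τ hτ.1).1
      have h7 := (hhb i τ hτ.1).2
      exact hwb n _ ⟨by linarith [hτ.1], by linarith [hτ.2]⟩
    have hmem : ((τ, w n τ, fun i => w n (τ - h i τ)) : ℝ × ℝ × (Fin m → ℝ)) ∈
        Icc t₀ T ×ˢ (Icc (0:ℝ) AA ×ˢ (univ : Set (Fin m)).pi fun _ => Icc (0:ℝ) AA) :=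
      ⟨hτ, hwm, fun i _ => hpastm i⟩
    have hLapb : Lap t₀ L n (τ, w n τ, fun i => w n (τ - h i τ)) ≤ BT :=
      (Lap_le_Ltil hLnn n _).trans
        (le_trans (le_abs_self _) (by simpa [Real.norm_eq_abs] using hBT _ hmem))
    have hLapnn := Lap_nonneg (t₀ := t₀) (L := L) hLnn n
      ((τ, w n τ, fun i => w n (τ - h i τ)) : ℝ × ℝ × (Fin m → ℝ))
    have h1 : |g n τ| ≤ |p τ| * |w n τ|
        + |c τ| * abs (Lap t₀ L n (τ, w n τ, fun i => w n (τ - h i τ)) + |F τ|) := by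
      simp only [hgdef]
      refine (abs_add_le _ _).trans ?_
      rw [abs_mul, abs_mul]
    have h2 : abs (Lap t₀ L n (τ, w n τ, fun i => w n (τ - h i τ)) + |F τ|) ≤ BT + MF := by
      rw [abs_of_nonneg (by positivity)]
      have h9 : |F τ| ≤ MF := by simpa [Real.norm_eq_abs] using hMF' τ hτ
      linarith
    have h3 : |w n τ| ≤ AA := by rw [abs_of_nonneg hwm.1]; exact hwm.2
    have h4 : |p τ| ≤ Mp := by simpa [Real.norm_eq_abs] using hMp' τ hτ
    have h5 : |c τ| ≤ Mc := by simpa [Real.norm_eq_abs] using hMc' τ hτ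
    have h6 : |p τ| * |w n τ| ≤ Mp * AA := mul_le_mul h4 h3 (abs_nonneg _) hMp0
    have h7 : |c τ| * abs (Lap t₀ L n (τ, w n τ, fun i => w n (τ - h i τ)) + |F τ|)
        ≤ Mc * (BT + MF) := mul_le_mul h5 h2 (abs_nonneg _) hMc0
    linarith
  -- continuity and integrability of the fields
  have hgcont : ∀ n, ContinuousOn (g n) (Ici t₀) := by
    intro n
    have hmapg : ContinuousOn
        (fun τ => ((τ, w n τ, fun i => w n (τ - h i τ)) : ℝ × ℝ × (Fin m → ℝ))) (Ici t₀) := by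
      refine ContinuousOn.prodMk continuousOn_id
        (ContinuousOn.prodMk (hwcont n).continuousOn ?_)
      rw [continuousOn_pi]
      intro i
      exact (hwcont n).comp_continuousOn (continuousOn_id.sub (hhc i))
    simp only [hgdef]
    exact (hpc.mul (hwcont n).continuousOn).add
      (hcc.mul (((Lap_continuous hLnn n).comp_continuousOn hmapg).add hFc.abs))
  have hgint : ∀ (n : ℕ) (t1 t2 : ℝ), t₀ ≤ t1 → t₀ ≤ t2 →
      IntervalIntegrable (g n) volume t1 t2 := by
    intro n t1 t2 h1 h2
    refine ContinuousOn.intervalIntegrable ?_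
    refine (hgcont n).mono ?_
    intro x hx
    rw [uIcc] at hx
    exact le_trans (le_min h1 h2) hx.1
  -- integral identity
  have hident : ∀ (n : ℕ) (T : ℝ), t₀ ≤ T → w n T = w n t₀ + ∫ τ in t₀..T, g n τ := by
    intro n T hT
    have hder : ∀ x ∈ Ioo t₀ T, HasDerivWithinAt (w n) (g n x) (Ioi x) x := by
      intro x hx
      have h8 := hwder n (kk T) x ⟨hx.1.le, by linarith [hk1 T, hx.2.le]⟩
      have h7 := derivIci_of_Icc hx.1.le (lt_of_lt_of_le hx.2 (hk1 T)) h8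
      exact h7.Ioi_of_Ici
    have h9 := intervalIntegral.integral_eq_sub_of_hasDeriv_right_of_le hT
      ((hwcont n).continuousOn) hder (hgint n t₀ T le_rfl hT)
    linarith [h9]
  -- Lipschitz estimate for the limit
  have hwLip : ∀ T, t₀ ≤ T → ∃ MW : ℝ, ∀ t1 ∈ Icc t₀ T, ∀ t2 ∈ Icc t₀ T,
      |wi t1 - wi t2| ≤ MW * |t1 - t2| := by
    intro T hT
    obtain ⟨MW, hMW⟩ := hwindow T hT
    refine ⟨MW, fun t1 h1 t2 h2 => ?_⟩
    have key : ∀ n, |w n t1 - w n t2| ≤ MW * |t1 - t2| := by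
      intro n
      have e1 := hident n t1 h1.1
      have e2 := hident n t2 h2.1
      have hadd := intervalIntegral.integral_add_adjacent_intervals
        (hgint n t₀ t2 le_rfl h2.1) (hgint n t2 t1 h2.1 h1.1)
      have e3 : w n t1 - w n t2 = ∫ τ in t2..t1, g n τ := by
        rw [e1, e2, ← hadd]; ring
      rw [e3]
      have h9 := intervalIntegral.norm_integral_le_of_norm_le_const (C := MW)
        (f := g n) (a := t2) (b := t1) ?_
      · rwa [Real.norm_eq_abs] at h9
      · intro x hx
        have hx' : x ∈ Icc t₀ T :=
          ⟨le_trans (le_min h2.1 h1.1) (le_of_lt hx.1),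
            le_trans hx.2 (max_le h2.2 h1.2)⟩
        simpa [Real.norm_eq_abs] using hMW n x hx'
    have ht1 := htendall t1 (by linarith [h1.1])
    have ht2 := htendall t2 (by linarith [h2.1])
    have hsub : Tendsto (fun n => |w n t1 - w n t2|) atTop (𝓝 |wi t1 - wi t2|) :=
      (ht1.sub ht2).abs
    exact le_of_tendsto hsub (Filter.Eventually.of_forall key)
  -- continuity of the limit
  have hwicont : ContinuousOn wi (Ici (t₀ - hbar)) := by
    intro τ hτ
    rcases lt_or_ge τ t₀ with h9 | h9
    · have h8 : ContinuousAt wi τ := by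
        refine ContinuousAt.congr hΦc.continuousAt ?_
        refine Filter.eventuallyEq_of_mem (Iio_mem_nhds h9) (fun x hx => ?_)
        exact (hwihist x (le_of_lt hx)).symm
      exact h8.continuousWithinAt
    · have hT : t₀ ≤ τ + 1 := by linarith
      obtain ⟨MW, hMW⟩ := hwLip (τ + 1) hT
      have hsplit : Icc (t₀ - hbar) t₀ ∪ Ici t₀ = Ici (t₀ - hbar) :=
        Icc_union_Ici_eq_Ici hist_sub
      rw [← hsplit]
      refine ContinuousWithinAt.union ?_ ?_
      · rcases eq_or_lt_of_le h9 with he | hlt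
        · exact (hΦc.continuousWithinAt).congr (fun x hx => hwihist x hx.2)
            (hwihist τ (le_of_eq he.symm))
        · refine continuousWithinAt_of_notMem_closure ?_
          rw [isClosed_Icc.closure_eq]
          exact fun hc' => absurd hc'.2 (not_le.2 hlt)
      · have hCW : ContinuousWithinAt wi (Icc t₀ (τ + 1)) τ := by
          rw [Metric.continuousWithinAt_iff]
          intro ε hε
          refine ⟨ε / (|MW| + 1), by positivity, fun x hx hd => ?_⟩
          rw [Real.dist_eq] at hd ⊢
          calc |wi x - wi τ| ≤ MW * |x - τ| := hMW x hx τ ⟨h9, by linarith⟩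
          _ ≤ (|MW| + 1) * |x - τ| := by
              refine mul_le_mul_of_nonneg_right ?_ (abs_nonneg _)
              linarith [le_abs_self MW]
          _ < (|MW| + 1) * (ε / (|MW| + 1)) := by
              refine mul_lt_mul_of_pos_left hd (by positivity)
          _ = ε := by field_simp
        refine hCW.mono_of_mem_nhdsWithin ?_
        refine Filter.mem_of_superset
          (inter_mem_nhdsWithin (Ici t₀) (Iio_mem_nhds (show τ < τ + 1 by linarith))) ?_
        exact fun x hx => ⟨hx.1, hx.2.le⟩
  -- the limit field
  set gi : ℝ → ℝ := fun τ =>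
    p τ * wi τ + c τ * (L τ (wi τ) (fun i => wi (τ - h i τ)) + |F τ|) with hgi
  have hpastb : ∀ (i : Fin m) (τ : ℝ), t₀ ≤ τ → t₀ - hbar ≤ τ - h i τ := by
    intro i τ hτ
    have := (hhb i τ hτ).2
    linarith
  -- pass to the limit in the integral identity
  have hwieq : ∀ T, t₀ ≤ T → wi T = Φ t₀ + ∫ τ in t₀..T, gi τ := by
    intro T hT
    obtain ⟨MW, hMW⟩ := hwindow T hT
    have hptw : ∀ τ ∈ Icc t₀ T, Tendsto (fun n => g n τ) atTop (𝓝 (gi τ)) := by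
      intro τ hτ
      have hτb : t₀ - hbar ≤ τ := by linarith [hτ.1]
      have hxconv : Tendsto
          (fun n => ((τ, w n τ, fun i => w n (τ - h i τ)) : ℝ × ℝ × (Fin m → ℝ)))
          atTop (𝓝 (((τ, wi τ, fun i => wi (τ - h i τ))) : ℝ × ℝ × (Fin m → ℝ))) := by
        exact Tendsto.prodMk_nhds tendsto_const_nhds
          (Tendsto.prodMk_nhds (htendall τ hτb)
            (tendsto_pi_nhds.2 fun i => htendall _ (hpastb i τ hτ.1)))
      have hLconv : Tendsto
          (fun n => Lap t₀ L n ((τ, w n τ, fun i => w n (τ - h i τ)) : ℝ × ℝ × (Fin m → ℝ)))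
          atTop (𝓝 (Ltil t₀ L (τ, wi τ, fun i => wi (τ - h i τ)))) := by
        rw [Metric.tendsto_atTop]
        intro ε hε
        have hu : Tendsto
            (fun n => Ltil t₀ L ((τ, w n τ, fun i => w n (τ - h i τ)) : ℝ × ℝ × (Fin m → ℝ)))
            atTop (𝓝 (Ltil t₀ L (τ, wi τ, fun i => wi (τ - h i τ)))) :=
          ((Ltil_continuous hLc).tendsto
            ((τ, wi τ, fun i => wi (τ - h i τ)) : ℝ × ℝ × (Fin m → ℝ))).comp hxconv
        obtain ⟨N1, hN1⟩ := (Metric.tendsto_atTop.1 hu) (ε / 2) (by linarith)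
        obtain ⟨N2, hN2⟩ := Lap_lower hLnn hLc
          ((τ, wi τ, fun i => wi (τ - h i τ)) : ℝ × ℝ × (Fin m → ℝ))
          (show (0:ℝ) < ε / 4 by linarith)
        have hc2 : Tendsto
            (fun n => Lap t₀ L N2 ((τ, w n τ, fun i => w n (τ - h i τ)) : ℝ × ℝ × (Fin m → ℝ)))
            atTop (𝓝 (Lap t₀ L N2 (τ, wi τ, fun i => wi (τ - h i τ)))) :=
          ((Lap_continuous hLnn N2).tendsto
            ((τ, wi τ, fun i => wi (τ - h i τ)) : ℝ × ℝ × (Fin m → ℝ))).comp hxconv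
        obtain ⟨N3, hN3⟩ := (Metric.tendsto_atTop.1 hc2) (ε / 4) (by linarith)
        refine ⟨max N1 (max N2 N3), fun n hn => ?_⟩
        have hn1 : N1 ≤ n := le_trans (le_max_left _ _) hn
        have hn2 : N2 ≤ n := le_trans (le_trans (le_max_left _ _) (le_max_right N1 _)) hn
        have hn3 : N3 ≤ n := le_trans (le_trans (le_max_right _ _) (le_max_right N1 _)) hn
        have hup := hN1 n hn1
        rw [Real.dist_eq] at hup
        have hlow2 := hN3 n hn3
        rw [Real.dist_eq] at hlow2
        have hl4 := hN2 N2 le_rfl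
        have hA : Lap t₀ L n ((τ, w n τ, fun i => w n (τ - h i τ)) : ℝ × ℝ × (Fin m → ℝ))
            ≤ Ltil t₀ L (τ, w n τ, fun i => w n (τ - h i τ)) := Lap_le_Ltil hLnn n _
        have hB : Lap t₀ L N2 ((τ, w n τ, fun i => w n (τ - h i τ)) : ℝ × ℝ × (Fin m → ℝ))
            ≤ Lap t₀ L n ((τ, w n τ, fun i => w n (τ - h i τ)) : ℝ × ℝ × (Fin m → ℝ)) :=
          Lap_mono_n hLnn hn2 _
        rw [Real.dist_eq]
        refine abs_sub_lt_iff.2 ⟨?_, ?_⟩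
        · have h5 := (abs_sub_lt_iff.1 hup).1
          linarith
        · have h5 := (abs_sub_lt_iff.1 hlow2).2
          linarith
      have hLeq : Ltil t₀ L (τ, wi τ, fun i => wi (τ - h i τ))
          = L τ (wi τ) (fun i => wi (τ - h i τ)) :=
        Ltil_eq hτ.1 (hwinn τ hτb) (fun i => hwinn _ (hpastb i τ hτ.1))
      have hres : Tendsto (fun n => g n τ) atTop
          (𝓝 (p τ * wi τ
            + c τ * (Ltil t₀ L (τ, wi τ, fun i => wi (τ - h i τ)) + |F τ|))) := by
        simp only [hgdef]
        exact (Tendsto.const_mul _ (htendall τ hτb)).add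
          (Tendsto.const_mul _ (hLconv.add tendsto_const_nhds))
      rw [hLeq] at hres
      exact hres
    have hDCT := intervalIntegral.tendsto_integral_filter_of_dominated_convergence
      (μ := volume) (a := t₀) (b := T) (F := g) (f := gi) (bound := fun _ => |MW|)
      (Filter.Eventually.of_forall (fun n =>
        (((hgcont n).mono (fun x hx => by
          rw [uIoc_of_le hT] at hx
          exact le_of_lt hx.1)).aestronglyMeasurable measurableSet_uIoc)))
      (Filter.Eventually.of_forall (fun n => MeasureTheory.ae_of_all _ (fun x hx => by
        rw [uIoc_of_le hT] at hx
        have h9 := hMW n x ⟨hx.1.le, hx.2⟩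
        rw [Real.norm_eq_abs]
        exact h9.trans (le_abs_self MW))))
      intervalIntegrable_const
      (MeasureTheory.ae_of_all _ (fun x hx => by
        rw [uIoc_of_le hT] at hx
        exact hptw x ⟨hx.1.le, hx.2⟩))
    have hlhs : Tendsto (fun n => w n T) atTop (𝓝 (wi T)) := htendall T (by linarith)
    have hrhs : Tendsto (fun n => w n T) atTop (𝓝 (Φ t₀ + ∫ τ in t₀..T, gi τ)) := by
      have he : (fun n => w n T) = fun n => Φ t₀ + ∫ τ in t₀..T, g n τ := by
        funext n
        rw [hident n T hT, hwhist n t₀ le_rfl]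
      rw [he]
      exact tendsto_const_nhds.add hDCT
    exact tendsto_nhds_unique hlhs hrhs
  -- continuity of the limit field
  have hwiIci : ContinuousOn wi (Ici t₀) :=
    hwicont.mono (fun x hx => by simp only [mem_Ici] at hx ⊢; linarith)
  have hgicont : ContinuousOn gi (Ici t₀) := by
    have hpasti : ∀ i : Fin m, ContinuousOn (fun τ => wi (τ - h i τ)) (Ici t₀) := by
      intro i
      refine ContinuousOn.comp (g := wi) (f := fun τ => τ - h i τ)
        hwicont (continuousOn_id.sub (hhc i)) ?_
      intro x hx
      simp only [mem_Ici] at hx ⊢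
      exact hpastb i x hx
    have hLpart : ContinuousOn (fun τ => L τ (wi τ) (fun i => wi (τ - h i τ))) (Ici t₀) := by
      refine ContinuousOn.comp
        (g := fun q : ℝ × ℝ × (Fin m → ℝ) => L q.1 q.2.1 q.2.2)
        (f := fun τ => ((τ, wi τ, fun i => wi (τ - h i τ)) : ℝ × ℝ × (Fin m → ℝ)))
        hLc ?_ ?_
      · exact ContinuousOn.prodMk continuousOn_id
          (ContinuousOn.prodMk hwiIci (by rw [continuousOn_pi]; exact hpasti))
      · intro x hx
        exact ⟨hx, trivial⟩
    simp only [hgi]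
    exact (hpc.mul hwiIci).add (hcc.mul (hLpart.add hFc.abs))
  have hgiint : ∀ b, t₀ ≤ b → IntervalIntegrable gi volume t₀ b := by
    intro b hb
    refine ContinuousOn.intervalIntegrable ?_
    rw [uIcc_of_le hb]
    exact hgicont.mono (fun x hx => hx.1)
  -- derivative of the limit
  have hwider : ∀ t, t₀ ≤ t → HasDerivWithinAt wi (gi t) (Ici t₀) t := by
    intro t ht
    have hI : HasDerivWithinAt (fun u => ∫ τ in t₀..u, gi τ) (gi t) (Ici t₀) t := by
      rcases eq_or_lt_of_le ht with he | hlt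
      · subst he
        exact intervalIntegral.integral_hasDerivWithinAt_right (hgiint t₀ le_rfl)
          ⟨Ici t₀, Filter.mem_of_superset self_mem_nhdsWithin Ioi_subset_Ici_self,
            hgicont.aestronglyMeasurable measurableSet_Ici⟩
          ((hgicont t₀ (mem_Ici.2 le_rfl)).mono Ioi_subset_Ici_self)
      · refine (intervalIntegral.integral_hasDerivAt_right (hgiint t ht)
          ⟨Ici t₀, Ici_mem_nhds hlt, hgicont.aestronglyMeasurable measurableSet_Ici⟩
          (hgicont.continuousAt (Ici_mem_nhds hlt))).hasDerivWithinAt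
    have heq : ∀ x ∈ Ici t₀, wi x = Φ t₀ + ∫ τ in t₀..x, gi τ := fun x hx => hwieq x hx
    exact (hI.const_add (Φ t₀)).congr heq (heq t ht)
  exact ⟨wi, hwihist, hwicont, fun t ht => hwinn t ht, hwiley, fun t ht => hwider t ht⟩

end AuxiliaryForStmt4

/-- Paper's Lemma 5: solutions of the scalar auxiliary equation (3.10) with pointwise
ordered nonnegative histories are pointwise ordered. -/
theorem stmt4
    (t₀ : ℝ) (m : ℕ) (h : Fin m → ℝ → ℝ) (hlow hbar : ℝ)
    (hpos : 0 < hlow) (hhle : hlow ≤ hbar)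
    (hhc : ∀ i, ContinuousOn (h i) (Ici t₀))
    (hhb : ∀ i, ∀ t ≥ t₀, hlow ≤ h i t ∧ h i t ≤ hbar)
    (p c F : ℝ → ℝ)
    (hpc : ContinuousOn p (Ici t₀)) (hcc : ContinuousOn c (Ici t₀))
    (hc1 : ∀ t ≥ t₀, 1 ≤ c t)
    (hFc : ContinuousOn F (Ici t₀))
    (L : ℝ → ℝ → (Fin m → ℝ) → ℝ)
    -- `L` is continuous in all variables
    (hLc : ContinuousOn (fun q : ℝ × ℝ × (Fin m → ℝ) => L q.1 q.2.1 q.2.2)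
      (Ici t₀ ×ˢ (univ : Set (ℝ × (Fin m → ℝ)))))
    -- `L` is locally Lipschitz in its second argument
    (hLl : ∀ t ≥ t₀, ∀ z : Fin m → ℝ, LocallyLipschitz (fun a => L t a z))
    -- `L` is nonnegative on nonnegative arguments
    (hLnn : ∀ t ≥ t₀, ∀ a : ℝ, 0 ≤ a → ∀ z : Fin m → ℝ, (∀ i, 0 ≤ z i) → 0 ≤ L t a z)
    -- `L` is nondecreasing in each of its last `m` arguments
    (hLmono : ∀ t ≥ t₀, ∀ a : ℝ, ∀ z z' : Fin m → ℝ, (∀ i, z i ≤ z' i) →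
      L t a z ≤ L t a z')
    (hL0 : ∀ t ≥ t₀, L t 0 (fun _ => 0) = 0)
    -- equation (3.10) admits at most one solution for each nonnegative continuous history
    (huniq : ∀ ϕ y y' : ℝ → ℝ, ContinuousOn ϕ (Icc (t₀ - hbar) t₀) →
      (∀ t ∈ Icc (t₀ - hbar) t₀, 0 ≤ ϕ t) →
      IsScalSol m t₀ hbar h p c L (fun t => |F t|) ϕ y →
      IsScalSol m t₀ hbar h p c L (fun t => |F t|) ϕ y' →
      ∀ t ≥ t₀, y t = y' t)
    -- two solutions with ordered nonnegative continuous histories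
    (ϕ₁ ϕ₂ y₁ y₂ : ℝ → ℝ)
    (hϕ₁c : ContinuousOn ϕ₁ (Icc (t₀ - hbar) t₀))
    (hϕ₂c : ContinuousOn ϕ₂ (Icc (t₀ - hbar) t₀))
    (hϕ₁nn : ∀ t ∈ Icc (t₀ - hbar) t₀, 0 ≤ ϕ₁ t)
    (hϕ₂nn : ∀ t ∈ Icc (t₀ - hbar) t₀, 0 ≤ ϕ₂ t)
    (hy₁ : IsScalSol m t₀ hbar h p c L (fun t => |F t|) ϕ₁ y₁)
    (hy₂ : IsScalSol m t₀ hbar h p c L (fun t => |F t|) ϕ₂ y₂)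
    (hord : ∀ t ∈ Icc (t₀ - hbar) t₀, ϕ₂ t ≤ ϕ₁ t) :
    ∀ t ≥ t₀, y₂ t ≤ y₁ t := by
  have hist_sub : t₀ - hbar ≤ t₀ := by linarith
  set Φ : ℝ → ℝ := fun τ => ϕ₂ (max (min τ t₀) (t₀ - hbar)) with hΦ
  have hΦmem : ∀ τ : ℝ, max (min τ t₀) (t₀ - hbar) ∈ Icc (t₀ - hbar) t₀ :=
    fun τ => ⟨le_max_right _ _, max_le (min_le_right _ _) hist_sub⟩
  have hΦeq : ∀ τ ∈ Icc (t₀ - hbar) t₀, Φ τ = ϕ₂ τ := by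
    intro τ hτ
    simp only [hΦ]
    rw [min_eq_left hτ.2, max_eq_left hτ.1]
  have hΦc : Continuous Φ := by
    refine hϕ₂c.comp_continuous
      ((continuous_id.min continuous_const).max continuous_const) hΦmem
  have hΦnn : ∀ τ, 0 ≤ Φ τ := fun τ => hϕ₂nn _ (hΦmem τ)
  have hΦle : ∀ τ ∈ Icc (t₀ - hbar) t₀, Φ τ ≤ y₁ τ := by
    intro τ hτ
    rw [hΦeq τ hτ, hy₁.2.2.1 τ hτ]
    exact hord τ hτ
  obtain ⟨w, hwhist, hwcont, hwnn, hwle, hwder⟩ :=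
    exists_minsol hpos hhle hhc hhb hpc hcc hc1 hFc hLc hLnn hLmono hy₁ hΦc hΦnn hΦle
  have hwsol : IsScalSol m t₀ hbar h p c L (fun t => |F t|) ϕ₂ w :=
    ⟨hwcont, hwnn, fun t htm => (hwhist t htm.2).trans (hΦeq t htm), hwder⟩
  intro t ht
  rw [huniq ϕ₂ y₂ w hϕ₂c hϕ₂nn hy₂ hwsol t ht]
  exact hwle t ht
end

section
/- Assume p̂ := sup_{t ≥ t₀} p(t) < 0, ĉ := sup_{t ≥ t₀} c(t) < ∞, for every y ≥ 0 the value L̂(y) := sup_{t ≥ t₀} L(t, y) is finite, and there is y₊ > 0 such that p̂·y + ĉ·L̂(y) < 0 for all y ∈ (0, y₊). Then the trivial solution of ẋ = A(t)x + f(t, x) is robustly stable under persistently acting delayed perturbations: writing |·|_∞ for the max norm on ℝⁿ, for every sufficiently small ε > 0 there exist Δ₁, Δ₂ > 0 such that for every continuous R : [t₀, ∞) × (ℝⁿ)^{m+1} → ℝⁿ with |R(t, χ₁, …, χ_{m+1})|_∞ < Δ₁ for all t ≥ t₀ whenever |χᵢ|_∞ < ε for all i, every continuous delays h₁⋆, …,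 hₘ⋆ : [t₀, ∞) → ℝ with h̲ ≤ hᵢ⋆(t) ≤ h̄, and every solution x on [t₀, ∞) of the perturbed system ẋ(t) = A(t)x(t) + f(t, x(t)) + R(t, x(t), x(t − h₁⋆(t)), …, x(t − hₘ⋆(t))) with continuous history φ of sup-norm ‖φ‖ < Δ₂, one has |x(t)|_∞ ≤ ε for all t ≥ t₀. (Paper's Corollary 1.) -/
open Set

noncomputable section

abbrev Euc (n : ℕ) : Type := EuclideanSpace ℝ (Fin n)

lemma euc_coord_le {n : ℕ} (v : Euc n) (i : Fin n) : |v i| ≤ ‖v‖ := by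
  rw [EuclideanSpace.norm_eq, ← Real.sqrt_sq_eq_abs]
  refine Real.sqrt_le_sqrt ?_
  have := Finset.single_le_sum (f := fun j => ‖v j‖ ^ 2)
    (fun j _ => sq_nonneg _) (Finset.mem_univ i)
  simpa [Real.norm_eq_abs, sq_abs] using this

lemma euc_norm_le {n : ℕ} (v : Euc n) (b : ℝ) (hb : 0 ≤ b) (h : ∀ i, |v i| ≤ b) :
    ‖v‖ ≤ n * b := by
  rw [EuclideanSpace.norm_eq]
  have h1 : ∑ j, ‖v j‖ ^ 2 ≤ (n : ℝ) * b ^ 2 := by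
    calc ∑ j, ‖v j‖ ^ 2 ≤ ∑ _j : Fin n, b ^ 2 := by
          refine Finset.sum_le_sum fun j _ => ?_
          have := h j
          rw [Real.norm_eq_abs]
          nlinarith [abs_nonneg (v j)]
      _ = (n : ℝ) * b ^ 2 := by simp [Finset.sum_const, nsmul_eq_mul]
  calc Real.sqrt (∑ j, ‖v j‖ ^ 2) ≤ Real.sqrt ((n : ℝ) * b ^ 2) := Real.sqrt_le_sqrt h1
    _ ≤ Real.sqrt (((n : ℝ) * b) ^ 2) := by
        refine Real.sqrt_le_sqrt ?_
        have : (n : ℝ) ≤ (n:ℝ)^2 := by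
          rcases Nat.eq_zero_or_pos n with h0 | h0
          · simp [h0]
          · have h1n : (1:ℝ) ≤ (n:ℝ) := by exact_mod_cast h0
            nlinarith
        nlinarith [sq_nonneg b]
    _ = (n : ℝ) * b := by
        rw [Real.sqrt_sq (by positivity)]

/-- A solution of the perturbed system
`x'(t) = A t (x t) + f (t, x t) + R (t, x t, x (t - h₁⋆ t), …, x (t - hₘ⋆ t))` for `t ≥ t₀`,
with continuous history `φ` on `[t₀ - h̄, t₀]`. -/
def IsPertSol (n m : ℕ) (t₀ hbar : ℝ) (hstar : Fin m → ℝ → ℝ)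
    (A : ℝ → (Euc n →L[ℝ] Euc n)) (f : ℝ → Euc n → Euc n)
    (R : ℝ → Euc n → (Fin m → Euc n) → Euc n) (φ x : ℝ → Euc n) : Prop :=
  ContinuousOn x (Ici (t₀ - hbar)) ∧
  (∀ t ∈ Icc (t₀ - hbar) t₀, x t = φ t) ∧
  ∀ t, t₀ ≤ t → HasDerivWithinAt x
    (A t (x t) + f t (x t) + R t (x t) (fun i => x (t - hstar i t))) (Ici t₀) t

set_option maxHeartbeats 4000000 in
/-- Paper's Corollary 1: a closed-form criterion for robust stability of the trivial
solution of `x' = A t x + f (t, x)` under persistently acting delayed perturbations. -/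
theorem stmt13
    (t₀ : ℝ) (n m : ℕ) (hlow hbar : ℝ)
    (hpos : 0 < hlow) (hhle : hlow ≤ hbar)
    (A : ℝ → (Euc n →L[ℝ] Euc n)) (hA : ContinuousOn A (Ici t₀))
    (f : ℝ → Euc n → Euc n)
    (hfc : ContinuousOn (fun q : ℝ × Euc n => f q.1 q.2)
      (Ici t₀ ×ˢ (univ : Set (Euc n))))
    -- `f` is Lipschitz in its second argument uniformly in `t`
    (hflip : ∃ K : NNReal, ∀ t ≥ t₀, LipschitzWith K (f t))
    (hf0 : ∀ t ≥ t₀, f t 0 = 0)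
    -- the scalar majorant `L`
    (L : ℝ → ℝ → ℝ)
    (hLc : ContinuousOn (fun q : ℝ × ℝ => L q.1 q.2) (Ici t₀ ×ˢ Ici (0 : ℝ)))
    (hLlip : ∃ K : NNReal, ∀ t ≥ t₀, LipschitzWith K (L t))
    (hLmono : ∀ t ≥ t₀, ∀ a b : ℝ, 0 ≤ a → a ≤ b → L t a ≤ L t b)
    (hLnn : ∀ t ≥ t₀, ∀ a : ℝ, 0 ≤ a → 0 ≤ L t a)
    (hL0 : ∀ t ≥ t₀, L t 0 = 0)
    (hLf : ∀ t ≥ t₀, ∀ a : Euc n, ‖f t a‖ ≤ L t ‖a‖)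
    -- the fundamental matrix `w` of `x' = A t x`, its inverse, and the derived
    -- coefficients `p` and `c`
    (w winv : ℝ → (Euc n →L[ℝ] Euc n))
    (hw0 : w t₀ = ContinuousLinearMap.id ℝ (Euc n))
    (hw : ∀ t ≥ t₀, HasDerivWithinAt w ((A t).comp (w t)) (Ici t₀) t)
    (hwinv : ∀ t ≥ t₀, (w t).comp (winv t) = ContinuousLinearMap.id ℝ (Euc n) ∧
      (winv t).comp (w t) = ContinuousLinearMap.id ℝ (Euc n))
    (p c : ℝ → ℝ)
    (hp : ∀ t ≥ t₀, HasDerivWithinAt (fun s => Real.log ‖w s‖) (p t) (Ici t₀) t)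
    (hc : ∀ t ≥ t₀, c t = ‖w t‖ * ‖winv t‖)
    -- `p̂ = sup p < 0`, `ĉ = sup c < ∞`, `L̂ y = sup_t L t y < ∞`
    (phat chat : ℝ) (Lhat : ℝ → ℝ)
    (hphat : IsLUB (p '' Ici t₀) phat) (hphatneg : phat < 0)
    (hchat : IsLUB (c '' Ici t₀) chat)
    (hLhat : ∀ y : ℝ, 0 ≤ y → IsLUB ((fun t => L t y) '' Ici t₀) (Lhat y))
    -- `p̂ y + ĉ L̂ y < 0` for all `y ∈ (0, y₊)`
    (yplus : ℝ) (hyplus : 0 < yplus)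
    (hneg : ∀ y : ℝ, 0 < y → y < yplus → phat * y + chat * Lhat y < 0) :
    -- robust stability of the trivial solution of `x' = A t x + f (t, x)` under
    -- persistently acting delayed perturbations, for every sufficiently small `ε > 0`
    ∃ ε₀ > 0, ∀ ε : ℝ, 0 < ε → ε ≤ ε₀ → ∃ Δ₁ > 0, ∃ Δ₂ > 0,
      ∀ R : ℝ → Euc n → (Fin m → Euc n) → Euc n,
        ContinuousOn (fun q : ℝ × Euc n × (Fin m → Euc n) => R q.1 q.2.1 q.2.2)
          (Ici t₀ ×ˢ (univ : Set (Euc n × (Fin m → Euc n)))) →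
        (∀ t ≥ t₀, ∀ (a : Euc n) (z : Fin m → Euc n),
          (∀ i, |a i| < ε) → (∀ j i, |z j i| < ε) → ∀ i, |R t a z i| < Δ₁) →
      ∀ hstar : Fin m → ℝ → ℝ,
        (∀ i, ContinuousOn (hstar i) (Ici t₀)) →
        (∀ i, ∀ t ≥ t₀, hlow ≤ hstar i t ∧ hstar i t ≤ hbar) →
      ∀ (φ : ℝ → Euc n) (x : ℝ → Euc n),
        ContinuousOn φ (Icc (t₀ - hbar) t₀) →
        (∀ t ∈ Icc (t₀ - hbar) t₀, ‖φ t‖ < Δ₂) →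
        IsPertSol n m t₀ hbar hstar A f R φ x →
        ∀ t ≥ t₀, ∀ i, |x t i| ≤ ε := by
  rcases Nat.eq_zero_or_pos n with hn | hn
  · refine ⟨1, one_pos, fun ε hε _ => ⟨1, one_pos, 1, one_pos, ?_⟩⟩
    intro R _ _ hstar _ _ φ x _ _ _ t _ i
    exact absurd i.isLt (by omega)
  haveI : Nonempty (Fin n) := ⟨⟨0, hn⟩⟩
  haveI ntv : Nontrivial (Euc n) := by
    refine ⟨⟨0, EuclideanSpace.single ⟨0, hn⟩ 1, fun h => ?_⟩⟩
    have h2 := congrArg (fun v : Euc n => v ⟨0, hn⟩) h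
    simp [EuclideanSpace.single_apply] at h2
  have hbar0 : 0 < hbar := lt_of_lt_of_le hpos hhle
  have hwc : ContinuousOn w (Ici t₀) := fun t ht => (hw t ht).continuousWithinAt
  -- units
  have hmul1 : ∀ t, t₀ ≤ t → (w t) * (winv t) = 1 := by
    intro t ht
    rw [ContinuousLinearMap.mul_def, ContinuousLinearMap.one_def]; exact (hwinv t ht).1
  have hmul2 : ∀ t, t₀ ≤ t → (winv t) * (w t) = 1 := by
    intro t ht
    rw [ContinuousLinearMap.mul_def, ContinuousLinearMap.one_def]; exact (hwinv t ht).2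
  have hRinv : ∀ t, t₀ ≤ t → Ring.inverse (w t) = winv t := by
    intro t ht
    exact Ring.inverse_unit ⟨w t, winv t, hmul1 t ht, hmul2 t ht⟩
  have hwinvc : ContinuousOn winv (Ici t₀) := by
    intro t ht
    have hca : ContinuousAt Ring.inverse (w t) :=
      NormedRing.inverse_continuousAt ⟨w t, winv t, hmul1 t ht, hmul2 t ht⟩
    have h3 : ContinuousWithinAt (fun s => Ring.inverse (w s)) (Ici t₀) t :=
      hca.comp_continuousWithinAt (hwc t ht)
    exact h3.congr (fun s hs => (hRinv s hs).symm) (hRinv t ht).symm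
  have hid1 : ∀ t, t₀ ≤ t → ∀ v, w t (winv t v) = v := by
    intro t ht v
    have h2 := ContinuousLinearMap.ext_iff.1 (hwinv t ht).1 v
    simpa using h2
  have hid2 : ∀ t, t₀ ≤ t → ∀ v, winv t (w t v) = v := by
    intro t ht v
    have h2 := ContinuousLinearMap.ext_iff.1 (hwinv t ht).2 v
    simpa using h2
  have hwinvd : ∀ t, t₀ ≤ t →
      HasDerivWithinAt winv (-((winv t).comp (A t))) (Ici t₀) t := by
    intro t ht
    have h3 := hasFDerivAt_ringInverse (𝕜 := ℝ) (R := Euc n →L[ℝ] Euc n)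
      ⟨w t, winv t, hmul1 t ht, hmul2 t ht⟩
    have hD := h3.comp_hasDerivWithinAt (f := w) t (hw t ht)
    refine HasDerivWithinAt.congr ?_ (fun s hs => (hRinv s hs).symm) (hRinv t ht).symm
    refine hD.congr_deriv ?_
    ext v
    simp only [Units.inv_mk, Units.val_mk, ContinuousLinearMap.neg_apply,
      ContinuousLinearMap.comp_apply, ContinuousLinearMap.mulLeftRight_apply,
      ContinuousLinearMap.mul_apply]
    rw [hid1 t ht]
  -- positivity of ‖w s‖
  have hwpos : ∀ s, t₀ ≤ s → 0 < ‖w s‖ := by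
    intro s hs
    refine norm_pos_iff.2 fun h0 => ?_
    obtain ⟨v, hv⟩ := exists_ne (0 : Euc n)
    have h4 := hid1 s hs v
    rw [h0] at h4
    simp only [ContinuousLinearMap.zero_apply] at h4
    exact hv h4.symm
  -- antitonicity of log ‖w‖ - phat * t
  have hmono : AntitoneOn (fun r => Real.log ‖w r‖ - phat * r) (Ici t₀) := by
    apply antitoneOn_of_deriv_nonpos (convex_Ici t₀)
    · exact fun r hr => ((hp r hr).continuousWithinAt.sub
        ((continuous_const.mul continuous_id).continuousWithinAt))
    · intro r hr
      rw [interior_Ici] at hr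
      have h1 : HasDerivAt (fun s => Real.log ‖w s‖ - phat * s) (p r - phat) r := by
        have h2 := (hp r (le_of_lt hr)).hasDerivAt (Ici_mem_nhds hr)
        exact (h2.sub ((hasDerivAt_id r).const_mul phat)).congr_deriv (by ring)
      exact h1.differentiableAt.differentiableWithinAt
    · intro r hr
      rw [interior_Ici] at hr
      have h1 : HasDerivAt (fun s => Real.log ‖w s‖ - phat * s) (p r - phat) r := by
        have h2 := (hp r (le_of_lt hr)).hasDerivAt (Ici_mem_nhds hr)
        exact (h2.sub ((hasDerivAt_id r).const_mul phat)).congr_deriv (by ring)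
      rw [h1.deriv]
      have : p r ≤ phat := hphat.1 ⟨r, mem_Ici.2 (le_of_lt hr), rfl⟩
      linarith
  -- kernel bound
  have hker : ∀ s t, t₀ ≤ s → s ≤ t →
      ‖(w t).comp (winv s)‖ ≤ chat * Real.exp (phat * (t - s)) := by
    intro s t hs hst
    have ht : t₀ ≤ t := le_trans hs hst
    have h1 : ‖w t‖ ≤ ‖w s‖ * Real.exp (phat * (t - s)) := by
      have h2 := hmono (mem_Ici.2 hs) (mem_Ici.2 ht) hst
      have h3 : Real.log ‖w t‖ ≤ Real.log ‖w s‖ + phat * (t - s) := by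
        simp only at h2; linarith
      calc ‖w t‖ = Real.exp (Real.log ‖w t‖) := (Real.exp_log (hwpos t ht)).symm
        _ ≤ Real.exp (Real.log ‖w s‖ + phat * (t - s)) := Real.exp_le_exp.2 h3
        _ = ‖w s‖ * Real.exp (phat * (t - s)) := by
            rw [Real.exp_add, Real.exp_log (hwpos s hs)]
    have hcs : c s ≤ chat := hchat.1 ⟨s, hs, rfl⟩
    calc ‖(w t).comp (winv s)‖ ≤ ‖w t‖ * ‖winv s‖ := ContinuousLinearMap.opNorm_comp_le _ _
      _ ≤ (‖w s‖ * Real.exp (phat * (t - s))) * ‖winv s‖ :=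
          mul_le_mul_of_nonneg_right h1 (norm_nonneg _)
      _ = (‖w s‖ * ‖winv s‖) * Real.exp (phat * (t - s)) := by ring
      _ ≤ chat * Real.exp (phat * (t - s)) := by
          have := (hc s hs) ▸ hcs
          exact mul_le_mul_of_nonneg_right this (Real.exp_pos _).le
  have hchat1 : (1 : ℝ) ≤ chat := by
    have hcs : c t₀ ≤ chat := hchat.1 ⟨t₀, self_mem_Ici, rfl⟩
    have h2 : (1 : ℝ) ≤ c t₀ := by
      rw [hc t₀ le_rfl]
      calc (1:ℝ) = ‖(w t₀).comp (winv t₀)‖ := by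
            rw [(hwinv t₀ le_rfl).1]; exact (ContinuousLinearMap.norm_id).symm
        _ ≤ ‖w t₀‖ * ‖winv t₀‖ := ContinuousLinearMap.opNorm_comp_le _ _
    linarith
  have hchatpos : (0:ℝ) < chat := lt_of_lt_of_le one_pos hchat1
  -- the exponential integral
  have hphatne : phat ≠ 0 := ne_of_lt hphatneg
  have hexp_int : ∀ T, t₀ ≤ T → (∫ s in t₀..T, Real.exp (phat * (T - s)))
      = (Real.exp (phat * (T - t₀)) - 1) / phat := by
    intro T hT
    have hΦ : ∀ s ∈ uIcc t₀ T, HasDerivAt (fun r => -Real.exp (phat * (T - r)) / phat)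
        (Real.exp (phat * (T - s))) s := by
      intro s _
      have h1 : HasDerivAt (fun r : ℝ => phat * (T - r)) (-phat) s := by
        simpa using ((hasDerivAt_id s).const_sub T).const_mul phat
      have h2 := h1.exp
      have h3 := h2.neg.div_const phat
      exact h3.congr_deriv (by rw [mul_neg, neg_neg, mul_div_assoc, div_self hphatne, mul_one])
    rw [intervalIntegral.integral_eq_sub_of_hasDerivAt hΦ
      ((Real.continuous_exp.comp (by fun_prop)).continuousOn.intervalIntegrable)]
    rw [sub_self, mul_zero, Real.exp_zero]
    field_simp
    ring
  -- main part
  refine ⟨yplus, hyplus, ?_⟩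
  intro ε hε hεle
  set δ : ℝ := ε / 2 with hδdef
  have hδpos : 0 < δ := by positivity
  have hδε : δ < ε := by rw [hδdef]; linarith
  have hδy : δ < yplus := by rw [hδdef]; linarith
  have hLδ0 : 0 ≤ Lhat δ :=
    le_trans (hLnn t₀ le_rfl δ hδpos.le) ((hLhat δ hδpos.le).1 ⟨t₀, self_mem_Ici, rfl⟩)
  set η : ℝ := -(phat * δ + chat * Lhat δ) with hηdef
  have hηpos : 0 < η := by
    have := hneg δ hδpos hδy
    rw [hηdef]; linarith
  set q : ℝ := -phat with hqdef
  have hq : 0 < q := by rw [hqdef]; linarith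
  have hn1 : (1:ℝ) ≤ (n:ℝ) := by exact_mod_cast hn
  have hnpos : (0:ℝ) < (n:ℝ) := by linarith
  set Δ₁ : ℝ := η / (4 * chat * n) with hΔ₁def
  have hΔ₁pos : 0 < Δ₁ := by rw [hΔ₁def]; positivity
  set Δ₂ : ℝ := min (δ/2) (η / (2 * chat * q)) with hΔ₂def
  have hΔ₂pos : 0 < Δ₂ := lt_min (by positivity) (by positivity)
  have hΔ₂δ : Δ₂ ≤ δ / 2 := min_le_left _ _
  refine ⟨Δ₁, hΔ₁pos, Δ₂, hΔ₂pos, ?_⟩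
  intro R hRc hRb hstar hstarc hstarb φ x hφc hφb hsol
  obtain ⟨hxc, hxφ, hx'⟩ := hsol
  have hxc' : ContinuousOn x (Ici t₀) := hxc.mono (Ici_subset_Ici.2 (by linarith))
  have hxt₀ : ‖x t₀‖ < Δ₂ := by
    rw [hxφ t₀ ⟨by linarith, le_rfl⟩]; exact hφb t₀ ⟨by linarith, le_rfl⟩
  have hxdc : ∀ j : Fin m, ContinuousOn (fun s => x (s - hstar j s)) (Ici t₀) := by
    intro j
    apply hxc.comp (continuousOn_id.sub (hstarc j))
    intro s hs
    have h2 := (hstarb j s hs).2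
    simp only [mem_Ici] at hs ⊢
    simp only [Pi.sub_apply, id_eq]
    linarith
  have hFc : ContinuousOn
      (fun s => f s (x s) + R s (x s) (fun j => x (s - hstar j s))) (Ici t₀) := by
    have h1 : ContinuousOn (fun s => f s (x s)) (Ici t₀) := by
      apply hfc.comp (continuousOn_id.prodMk hxc')
      intro s hs; exact ⟨hs, mem_univ _⟩
    have h2 : ContinuousOn (fun s => R s (x s) (fun j => x (s - hstar j s))) (Ici t₀) := by
      apply hRc.comp (continuousOn_id.prodMk (hxc'.prodMk (continuousOn_pi.2 hxdc)))
      intro s hs; exact ⟨hs, mem_univ _⟩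
    exact h1.add h2
  have hgc : ContinuousOn
      (fun s => winv s (f s (x s) + R s (x s) (fun j => x (s - hstar j s)))) (Ici t₀) :=
    hwinvc.clm_apply hFc
  have hyc : ContinuousOn (fun s => winv s (x s)) (Ici t₀) := hwinvc.clm_apply hxc'
  have hy : ∀ t, t₀ ≤ t → HasDerivWithinAt (fun s => winv s (x s))
      (winv t (f t (x t) + R t (x t) (fun i => x (t - hstar i t)))) (Ici t₀) t := by
    intro t ht
    have h1 := (hwinvd t ht).clm_apply (hx' t ht)
    refine h1.congr_deriv ?_
    simp only [ContinuousLinearMap.neg_apply, ContinuousLinearMap.comp_apply, map_add]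
    abel
  have key : ∀ t, t₀ ≤ t → ‖x t‖ ≤ δ := by
    by_contra hcon
    push_neg at hcon
    obtain ⟨t₁, ht₁, hgt⟩ := hcon
    have hBne : ({s : ℝ | t₀ ≤ s ∧ δ ≤ ‖x s‖}).Nonempty := ⟨t₁, ht₁, hgt.le⟩
    have hBdd : BddBelow {s : ℝ | t₀ ≤ s ∧ δ ≤ ‖x s‖} := ⟨t₀, fun s hs => hs.1⟩
    have hψ : Continuous fun s => ‖x (max s t₀)‖ := by
      have hmx : Continuous fun s : ℝ => max s t₀ := continuous_id.max continuous_const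
      exact (hxc.comp_continuous hmx fun s => by
        simp only [mem_Ici]
        have := le_max_right s t₀
        linarith).norm
    have hBclosed : IsClosed {s : ℝ | t₀ ≤ s ∧ δ ≤ ‖x s‖} := by
      have heq : {s : ℝ | t₀ ≤ s ∧ δ ≤ ‖x s‖}
          = Ici t₀ ∩ (fun s => ‖x (max s t₀)‖) ⁻¹' Ici δ := by
        ext s
        simp only [mem_inter_iff, mem_Ici, mem_preimage, mem_setOf_eq]
        constructor
        · rintro ⟨h1, h2⟩; exact ⟨h1, by rwa [max_eq_left h1]⟩
        · rintro ⟨h1, h2⟩; rw [max_eq_left h1] at h2; exact ⟨h1, h2⟩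
      rw [heq]
      exact isClosed_Ici.inter (IsClosed.preimage hψ isClosed_Ici)
    set T := sInf {s : ℝ | t₀ ≤ s ∧ δ ≤ ‖x s‖} with hTdef
    have hTB : T ∈ {s : ℝ | t₀ ≤ s ∧ δ ≤ ‖x s‖} := hBclosed.csInf_mem hBne hBdd
    obtain ⟨hTt₀, hTδ⟩ := hTB
    have hlt : ∀ s, t₀ ≤ s → s < T → ‖x s‖ < δ := by
      intro s hs hsT
      by_contra hcon2
      push_neg at hcon2
      have hmem : s ∈ {s : ℝ | t₀ ≤ s ∧ δ ≤ ‖x s‖} := ⟨hs, hcon2⟩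
      have h3 := csInf_le hBdd hmem
      rw [← hTdef] at h3
      linarith
    have hxTle : ‖x T‖ ≤ δ := by
      rcases eq_or_lt_of_le hTt₀ with h | h
      · rw [← h]; linarith [hxt₀]
      · have hcn : ContinuousOn (fun s => ‖x s‖) (Icc t₀ T) :=
          (hxc'.mono Icc_subset_Ici_self).norm
        have hclosed2 : IsClosed (Icc t₀ T ∩ (fun s => ‖x s‖) ⁻¹' Iic δ) :=
          hcn.preimage_isClosed_of_isClosed isClosed_Icc isClosed_Iic
        have hsub : Ico t₀ T ⊆ Icc t₀ T ∩ (fun s => ‖x s‖) ⁻¹' Iic δ :=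
          fun s hs => ⟨⟨hs.1, hs.2.le⟩, (hlt s hs.1 hs.2).le⟩
        have hTm : T ∈ Icc t₀ T ∩ (fun s => ‖x s‖) ⁻¹' Iic δ := by
          have hTmem : T ∈ closure (Ico t₀ T) := by
            rw [closure_Ico (ne_of_lt h)]
            exact ⟨hTt₀, le_rfl⟩
          exact hclosed2.closure_subset ((closure_mono hsub) hTmem)
        exact hTm.2
    have hle : ∀ s ∈ Icc t₀ T, ‖x s‖ ≤ δ := by
      intro s hs
      rcases eq_or_lt_of_le hs.2 with h | h
      · rw [h]; exact hxTle
      · exact (hlt s hs.1 h).le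
    set C : ℝ := Lhat δ + n * Δ₁ with hCdef
    have hC0 : 0 ≤ C := by
      rw [hCdef]
      have : (0:ℝ) ≤ (n:ℝ) * Δ₁ := by positivity
      linarith
    have hFb : ∀ s ∈ Icc t₀ T,
        ‖f s (x s) + R s (x s) (fun j => x (s - hstar j s))‖ ≤ C := by
      intro s hs
      have hxs : ‖x s‖ ≤ δ := hle s hs
      have h1 : ‖f s (x s)‖ ≤ Lhat δ := by
        calc ‖f s (x s)‖ ≤ L s ‖x s‖ := hLf s hs.1 _
          _ ≤ L s δ := hLmono s hs.1 _ _ (norm_nonneg _) hxs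
          _ ≤ Lhat δ := (hLhat δ hδpos.le).1 ⟨s, hs.1, rfl⟩
      have h2 : ‖R s (x s) (fun j => x (s - hstar j s))‖ ≤ n * Δ₁ := by
        apply euc_norm_le _ _ hΔ₁pos.le
        intro i
        refine le_of_lt (hRb s hs.1 _ _ ?_ ?_ i)
        · intro i'
          exact lt_of_le_of_lt (le_trans (euc_coord_le _ _) hxs) hδε
        · intro j i'
          have hrb := hstarb j s hs.1
          have hr1 : t₀ - hbar ≤ s - hstar j s := by
            have h3 := hrb.2; have h4 := hs.1; linarith
          rcases le_or_gt (s - hstar j s) t₀ with hcc | hcc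
          · rw [hxφ _ ⟨hr1, hcc⟩]
            have hb := hφb _ ⟨hr1, hcc⟩
            have h3 := euc_coord_le (φ (s - hstar j s)) i'
            linarith
          · have hrT : s - hstar j s ≤ T := by
              have h3 := hrb.1; have h4 := hs.2; linarith
            have hb := hle _ ⟨hcc.le, hrT⟩
            have h3 := euc_coord_le (x (s - hstar j s)) i'
            linarith
      calc ‖f s (x s) + R s (x s) (fun j => x (s - hstar j s))‖
          ≤ ‖f s (x s)‖ + ‖R s (x s) (fun j => x (s - hstar j s))‖ := norm_add_le _ _
        _ ≤ C := by rw [hCdef]; exact add_le_add h1 h2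
    have hgcT : ContinuousOn
        (fun s => winv s (f s (x s) + R s (x s) (fun j => x (s - hstar j s)))) (Icc t₀ T) :=
      hgc.mono Icc_subset_Ici_self
    have hgint : IntervalIntegrable
        (fun s => winv s (f s (x s) + R s (x s) (fun j => x (s - hstar j s))))
        MeasureTheory.volume t₀ T := hgcT.intervalIntegrable_of_Icc hTt₀
    have hFTC : winv T (x T) = winv t₀ (x t₀) +
        ∫ s in t₀..T, winv s (f s (x s) + R s (x s) (fun j => x (s - hstar j s))) := by
      have h4 := intervalIntegral.integral_eq_sub_of_hasDeriv_right_of_le hTt₀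
        (hyc.mono Icc_subset_Ici_self)
        (fun s hs => ((hy s hs.1.le).hasDerivAt (Ici_mem_nhds hs.1)).hasDerivWithinAt)
        hgint
      rw [h4]
      simp
    have hxTval : x T = (w T) (winv t₀ (x t₀)) +
        ∫ s in t₀..T, (w T) (winv s (f s (x s) + R s (x s) (fun j => x (s - hstar j s)))) := by
      have h5 : x T = w T (winv T (x T)) := (hid1 T hTt₀ (x T)).symm
      rw [h5, hFTC, map_add, ContinuousLinearMap.intervalIntegral_comp_comm _ hgint]
    have hEx1 : Real.exp (phat * (T - t₀)) ≤ 1 := by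
      rw [← Real.exp_zero]
      apply Real.exp_le_exp.2
      have h6 := mul_nonneg (neg_nonneg.2 hphatneg.le) (sub_nonneg.2 hTt₀)
      nlinarith
    have ht1 : ‖(w T) (winv t₀ (x t₀))‖ ≤ chat * Δ₂ := by
      calc ‖(w T) (winv t₀ (x t₀))‖ = ‖((w T).comp (winv t₀)) (x t₀)‖ := by
            rw [ContinuousLinearMap.comp_apply]
        _ ≤ ‖(w T).comp (winv t₀)‖ * ‖x t₀‖ := ContinuousLinearMap.le_opNorm _ _
        _ ≤ (chat * Real.exp (phat * (T - t₀))) * Δ₂ :=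
            mul_le_mul (hker t₀ T le_rfl hTt₀) hxt₀.le (norm_nonneg _) (by positivity)
        _ ≤ chat * Δ₂ := by
            nlinarith [mul_nonneg (mul_nonneg hchatpos.le hΔ₂pos.le)
              (sub_nonneg.2 hEx1)]
    have hnormpt : ∀ s ∈ Icc t₀ T,
        ‖(w T) (winv s (f s (x s) + R s (x s) (fun j => x (s - hstar j s))))‖
          ≤ chat * C * Real.exp (phat * (T - s)) := by
      intro s hs
      calc ‖(w T) (winv s (f s (x s) + R s (x s) (fun j => x (s - hstar j s))))‖
          = ‖((w T).comp (winv s)) (f s (x s) + R s (x s) (fun j => x (s - hstar j s)))‖ := by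
            rw [ContinuousLinearMap.comp_apply]
        _ ≤ ‖(w T).comp (winv s)‖ *
            ‖f s (x s) + R s (x s) (fun j => x (s - hstar j s))‖ :=
            ContinuousLinearMap.le_opNorm _ _
        _ ≤ (chat * Real.exp (phat * (T - s))) * C :=
            mul_le_mul (hker s T hs.1 hs.2) (hFb s hs) (norm_nonneg _) (by positivity)
        _ = chat * C * Real.exp (phat * (T - s)) := by ring
    have hint1 : IntervalIntegrable
        (fun s => ‖(w T) (winv s (f s (x s) + R s (x s) (fun j => x (s - hstar j s))))‖)
        MeasureTheory.volume t₀ T :=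
      ((continuousOn_const.clm_apply hgcT).norm).intervalIntegrable_of_Icc hTt₀
    have hint2 : IntervalIntegrable (fun s => chat * C * Real.exp (phat * (T - s)))
        MeasureTheory.volume t₀ T :=
      Continuous.intervalIntegrable (by fun_prop) _ _
    have ht2 : ‖∫ s in t₀..T, (w T) (winv s (f s (x s) + R s (x s) (fun j => x (s - hstar j s))))‖
        ≤ chat * C * ((Real.exp (phat * (T - t₀)) - 1) / phat) := by
      calc ‖∫ s in t₀..T, (w T) (winv s (f s (x s) + R s (x s) (fun j => x (s - hstar j s))))‖
          ≤ ∫ s in t₀..T,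
            ‖(w T) (winv s (f s (x s) + R s (x s) (fun j => x (s - hstar j s))))‖ :=
            intervalIntegral.norm_integral_le_integral_norm hTt₀
        _ ≤ ∫ s in t₀..T, chat * C * Real.exp (phat * (T - s)) :=
            intervalIntegral.integral_mono_on hTt₀ hint1 hint2 hnormpt
        _ = chat * C * ∫ s in t₀..T, Real.exp (phat * (T - s)) := by
            rw [intervalIntegral.integral_const_mul]
        _ = chat * C * ((Real.exp (phat * (T - t₀)) - 1) / phat) := by
            rw [hexp_int T hTt₀]
    have hfinal : ‖x T‖ ≤ chat * Δ₂ + chat * C * ((Real.exp (phat * (T - t₀)) - 1) / phat) := by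
      rw [hxTval]
      exact le_trans (norm_add_le _ _) (add_le_add ht1 ht2)
    -- arithmetic
    have hE0 : 0 < Real.exp (phat * (T - t₀)) := Real.exp_pos _
    have hcC : chat * C = q * δ - (3/4) * η := by
      have e1 : chat * (n:ℝ) * Δ₁ = η / 4 := by
        rw [hΔ₁def]
        field_simp
      have e2 : chat * Lhat δ = q * δ - η := by rw [hηdef, hqdef]; ring
      rw [hCdef]
      linear_combination e2 + e1
    have hΔ₂b : chat * Δ₂ ≤ η / (2 * q) := by
      have h7 : Δ₂ ≤ η / (2 * chat * q) := min_le_right _ _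
      have h8 : chat * Δ₂ ≤ chat * (η / (2 * chat * q)) :=
        mul_le_mul_of_nonneg_left h7 hchatpos.le
      have h9 : chat * (η / (2 * chat * q)) = η / (2 * q) := by
        field_simp
      linarith
    have hIle : (Real.exp (phat * (T - t₀)) - 1) / phat ≤ 1 / q := by
      have h10 : (Real.exp (phat * (T - t₀)) - 1) / phat
          = (1 - Real.exp (phat * (T - t₀))) / q := by
        rw [hqdef]
        field_simp
        ring
      rw [h10]
      exact (div_le_div_iff_of_pos_right hq).2 (by linarith)
    have hI0 : 0 ≤ (Real.exp (phat * (T - t₀)) - 1) / phat := by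
      have h10 : (Real.exp (phat * (T - t₀)) - 1) / phat
          = (1 - Real.exp (phat * (T - t₀))) / q := by
        rw [hqdef]
        field_simp
        ring
      rw [h10]
      exact div_nonneg (by linarith) hq.le
    have hCC0 : 0 ≤ chat * C := mul_nonneg hchatpos.le hC0
    have hmul : chat * C * ((Real.exp (phat * (T - t₀)) - 1) / phat) ≤ chat * C * (1 / q) :=
      mul_le_mul_of_nonneg_left hIle hCC0
    have heq3 : chat * C * (1 / q) = δ - (3/4) * (η / q) := by
      rw [hcC]
      field_simp
    have heq4 : η / (2 * q) = (1/2) * (η / q) := by ring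
    have hηq : 0 < η / q := div_pos hηpos hq
    have : ‖x T‖ < δ := by
      calc ‖x T‖ ≤ chat * Δ₂ + chat * C * ((Real.exp (phat * (T - t₀)) - 1) / phat) := hfinal
        _ ≤ chat * Δ₂ + chat * C * (1 / q) := by linarith
        _ = chat * Δ₂ + δ - (3/4) * (η / q) := by rw [heq3]; ring
        _ ≤ (1/2) * (η / q) + δ - (3/4) * (η / q) := by linarith
        _ < δ := by linarith
    linarith
  intro t ht i
  have h1 := euc_coord_le (x t) i
  have h2 := key t ht
  linarith
end
end
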